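/- arXiv:2206.01260 — 4 statements merged into one kernel-verified Lean document; each statement's English description precedes it below -/
import Mathlib

section
/- Let P and Q be probability measures on ℝⁿ and let 1 ≤ k ≤ n. For S ⊆ {1,…,n}, let P_S and Q_S denote the marginal laws of the coordinates indexed by S under P and Q respectively. Then the average over all k-element subsets S of {1,…,n} of W₂²(P_S, Q_S), i.e. C(n,k)⁻¹ Σ_{S ⊆ [n], |S| = k} W₂²(P_S, Q_S), is at most (1/⌊n/k⌋) · W₂²(P, Q). -/
open MeasureTheory Real Filter Topology
open scoped ENNReal NNReal BigOperators Classical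

noncomputable section

/-- The squared quadratic Wasserstein distance with cost `c` (the squared distance),
defined as the infimum over couplings of `μ` and `ν`, valued in `[0,∞]`. -/
def W2sq {α : Type*} [MeasurableSpace α] (c : α → α → ℝ) (μ ν : Measure α) : ℝ≥0∞ :=
  ⨅ (cpl : Measure (α × α)) (_ : cpl.map Prod.fst = μ) (_ : cpl.map Prod.snd = ν),
    ∫⁻ p, ENNReal.ofReal (c p.1 p.2) ∂cpl


open Finset in
private lemma count_aux (n k : ℕ) (hk : 1 ≤ k) (i : Fin n) :
    ((Finset.powersetCard k (Finset.univ : Finset (Fin n))).filter (fun S => i ∈ S)).card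
      = (n-1).choose (k-1) := by
  have hc : #((Finset.univ : Finset (Fin n)).erase i) = n - 1 := by
    rw [Finset.card_erase_of_mem (Finset.mem_univ i), Finset.card_univ, Fintype.card_fin]
  rw [← hc, ← Finset.card_powersetCard (k-1) ((Finset.univ : Finset (Fin n)).erase i)]
  refine Finset.card_bij' (fun S _ => S.erase i) (fun T _ => insert i T) ?_ ?_ ?_ ?_
  · intro S hS
    simp only [Finset.mem_filter, Finset.mem_powersetCard] at hS
    simp only [Finset.mem_powersetCard]
    constructor
    · intro x hx
      simp only [Finset.mem_erase] at hx ⊢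
      exact ⟨hx.1, Finset.mem_univ _⟩
    · rw [Finset.card_erase_of_mem hS.2, hS.1.2]
  · intro T hT
    simp only [Finset.mem_powersetCard] at hT
    have hiT : i ∉ T := fun h => by simpa using hT.1 h
    simp only [Finset.mem_filter, Finset.mem_powersetCard]
    refine ⟨⟨Finset.subset_univ _, ?_⟩, Finset.mem_insert_self _ _⟩
    rw [Finset.card_insert_of_notMem hiT, hT.2]
    omega
  · intro S hS
    simp only [Finset.mem_filter] at hS
    exact Finset.insert_erase hS.2
  · intro T hT
    simp only [Finset.mem_powersetCard] at hT
    have hiT : i ∉ T := fun h => by simpa using hT.1 h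
    exact Finset.erase_insert hiT

private lemma nat_aux (n k : ℕ) (hk : 1 ≤ k) (hkn : k ≤ n) :
    (n / k) * (n-1).choose (k-1) ≤ n.choose k := by
  have h1 : n * (n-1).choose (k-1) = n.choose k * k := by
    obtain ⟨n', rfl⟩ : ∃ n', n = n' + 1 := ⟨n - 1, by omega⟩
    obtain ⟨k', rfl⟩ : ∃ k', k = k' + 1 := ⟨k - 1, by omega⟩
    simpa using (Nat.add_one_mul_choose_eq n' k')
  have h2 : (n / k) * k ≤ n := Nat.div_mul_le_self n k
  have := Nat.mul_le_mul_right ((n-1).choose (k-1)) h2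
  rw [mul_right_comm, h1] at this
  exact Nat.le_of_mul_le_mul_right this hk


/-- the average over all `k`-element subsets `S` of `[n]` of
`W₂²(P_S, Q_S)` is at most `W₂²(P,Q)/⌊n/k⌋`. -/
theorem stmt_8 (n k : ℕ) (hk1 : 1 ≤ k) (hkn : k ≤ n)
    (P Q : Measure (Fin n → ℝ)) [IsProbabilityMeasure P] [IsProbabilityMeasure Q] :
    ((n.choose k : ℝ≥0∞))⁻¹ *
      ∑ S ∈ Finset.powersetCard k (Finset.univ : Finset (Fin n)),
        W2sq (fun u v : {a // a ∈ S} → ℝ => ∑ j, (u j - v j) ^ 2)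
          (P.map fun x (j : {a // a ∈ S}) => x j.1)
          (Q.map fun x (j : {a // a ∈ S}) => x j.1)
      ≤ ((n / k : ℕ) : ℝ≥0∞)⁻¹ *
        W2sq (fun x y : Fin n → ℝ => ∑ i, (x i - y i) ^ 2) P Q := by
  have hnk1 : 1 ≤ n / k := (Nat.one_le_div_iff (by omega)).2 hkn
  have hb0 : ((n / k : ℕ) : ℝ≥0∞) ≠ 0 := by
    simp only [ne_eq, Nat.cast_eq_zero]; omega
  have hbt : ((n / k : ℕ) : ℝ≥0∞) ≠ ⊤ := ENNReal.natCast_ne_top _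
  have hi0 : ((n / k : ℕ) : ℝ≥0∞)⁻¹ ≠ 0 := ENNReal.inv_ne_zero.2 hbt
  have hit : ((n / k : ℕ) : ℝ≥0∞)⁻¹ ≠ ⊤ := ENNReal.inv_ne_top.2 hb0
  conv_rhs => rw [W2sq]
  rw [ENNReal.mul_iInf_of_ne hi0 hit]
  refine le_iInf fun cpl => ?_
  rw [ENNReal.mul_iInf_of_ne hi0 hit]
  refine le_iInf fun h1 => ?_
  rw [ENNReal.mul_iInf_of_ne hi0 hit]
  refine le_iInf fun h2 => ?_
  -- bound each marginal W2sq by the corresponding integral w.r.t. cpl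
  set A := Finset.powersetCard k (Finset.univ : Finset (Fin n)) with hA
  have key : ∀ S ∈ A,
      W2sq (fun u v : {a // a ∈ S} → ℝ => ∑ j, (u j - v j) ^ 2)
          (P.map fun x (j : {a // a ∈ S}) => x j.1)
          (Q.map fun x (j : {a // a ∈ S}) => x j.1)
        ≤ ∫⁻ p, ENNReal.ofReal (∑ j : {a // a ∈ S}, (p.1 j.1 - p.2 j.1) ^ 2) ∂cpl := by
    intro S _
    set f : (Fin n → ℝ) → ({a // a ∈ S} → ℝ) := fun x j => x j.1 with hf
    have hfm : Measurable f := measurable_pi_lambda _ fun j => measurable_pi_apply _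
    have hmap : Measurable (Prod.map f f) := hfm.prodMap hfm
    have h1' : (cpl.map (Prod.map f f)).map Prod.fst = P.map f := by
      rw [Measure.map_map measurable_fst hmap, ← h1, Measure.map_map hfm measurable_fst]
      rfl
    have h2' : (cpl.map (Prod.map f f)).map Prod.snd = Q.map f := by
      rw [Measure.map_map measurable_snd hmap, ← h2, Measure.map_map hfm measurable_snd]
      rfl
    have hcost : Measurable fun p : ({a // a ∈ S} → ℝ) × ({a // a ∈ S} → ℝ) =>
        ENNReal.ofReal (∑ j, (p.1 j - p.2 j) ^ 2) := by
      apply ENNReal.measurable_ofReal.comp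
      apply Finset.measurable_sum
      intro j _
      exact (((measurable_pi_apply j).comp measurable_fst).sub
        ((measurable_pi_apply j).comp measurable_snd)).pow_const 2
    rw [W2sq]
    refine (iInf_le _ (cpl.map (Prod.map f f))).trans
      ((iInf_le _ h1').trans ((iInf_le _ h2').trans ?_))
    rw [lintegral_map hcost hmap]
    rfl
  have hcosts : ∀ S : Finset (Fin n), Measurable fun p : (Fin n → ℝ) × (Fin n → ℝ) =>
      ENNReal.ofReal (∑ j : {a // a ∈ S}, (p.1 j.1 - p.2 j.1) ^ 2) := by
    intro S
    apply ENNReal.measurable_ofReal.comp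
    apply Finset.measurable_sum
    intro j _
    exact (((measurable_pi_apply j.1).comp measurable_fst).sub
      ((measurable_pi_apply j.1).comp measurable_snd)).pow_const 2
  -- double counting
  have hsum : ∑ S ∈ A, ∫⁻ p, ENNReal.ofReal (∑ j : {a // a ∈ S}, (p.1 j.1 - p.2 j.1) ^ 2) ∂cpl
      = ((n-1).choose (k-1) : ℝ≥0∞) *
        ∫⁻ p, ENNReal.ofReal (∑ i, (p.1 i - p.2 i) ^ 2) ∂cpl := by
    rw [← lintegral_finset_sum _ (fun S _ => hcosts S),
      ← lintegral_const_mul' _ _ (ENNReal.natCast_ne_top _)]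
    refine lintegral_congr fun p => ?_
    have step1 : ∀ S ∈ A, ENNReal.ofReal (∑ j : {a // a ∈ S}, (p.1 j.1 - p.2 j.1) ^ 2)
        = ∑ i ∈ S, ENNReal.ofReal ((p.1 i - p.2 i) ^ 2) := by
      intro S _
      rw [← Finset.sum_coe_sort S (fun i => ENNReal.ofReal ((p.1 i - p.2 i) ^ 2))]
      exact ENNReal.ofReal_sum_of_nonneg fun _ _ => sq_nonneg _
    rw [Finset.sum_congr rfl step1]
    have step2 : ∑ S ∈ A, ∑ i ∈ S, ENNReal.ofReal ((p.1 i - p.2 i) ^ 2)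
        = ∑ i : Fin n, ((n-1).choose (k-1) : ℝ≥0∞) * ENNReal.ofReal ((p.1 i - p.2 i) ^ 2) := by
      have : ∀ S ∈ A, ∑ i ∈ S, ENNReal.ofReal ((p.1 i - p.2 i) ^ 2)
          = ∑ i : Fin n, if i ∈ S then ENNReal.ofReal ((p.1 i - p.2 i) ^ 2) else 0 := by
        intro S _
        rw [Finset.sum_ite_mem, Finset.univ_inter]
      rw [Finset.sum_congr rfl this, Finset.sum_comm]
      refine Finset.sum_congr rfl fun i _ => ?_
      rw [← Finset.sum_filter, Finset.sum_const, count_aux n k hk1 i, nsmul_eq_mul]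
    rw [step2, ← Finset.mul_sum,
      ENNReal.ofReal_sum_of_nonneg fun _ _ => sq_nonneg _]
  calc ((n.choose k : ℝ≥0∞))⁻¹ * ∑ S ∈ A,
        W2sq (fun u v : {a // a ∈ S} → ℝ => ∑ j, (u j - v j) ^ 2)
          (P.map fun x (j : {a // a ∈ S}) => x j.1)
          (Q.map fun x (j : {a // a ∈ S}) => x j.1)
      ≤ ((n.choose k : ℝ≥0∞))⁻¹ *
        ∑ S ∈ A, ∫⁻ p, ENNReal.ofReal (∑ j : {a // a ∈ S}, (p.1 j.1 - p.2 j.1) ^ 2) ∂cpl :=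
        mul_le_mul_right (Finset.sum_le_sum key) _
    _ = (((n.choose k : ℝ≥0∞))⁻¹ * ((n-1).choose (k-1) : ℝ≥0∞)) *
        ∫⁻ p, ENNReal.ofReal (∑ i, (p.1 i - p.2 i) ^ 2) ∂cpl := by
        rw [hsum, mul_assoc]
    _ ≤ ((n / k : ℕ) : ℝ≥0∞)⁻¹ * ∫⁻ p, ENNReal.ofReal (∑ i, (p.1 i - p.2 i) ^ 2) ∂cpl := by
        refine mul_le_mul' ?_ le_rfl
        rw [ENNReal.le_inv_iff_mul_le, mul_assoc]
        have hcast : (((n-1).choose (k-1) : ℝ≥0∞)) * ((n / k : ℕ) : ℝ≥0∞)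
            ≤ (n.choose k : ℝ≥0∞) := by
          have hnat : (n-1).choose (k-1) * (n/k) ≤ n.choose k := by
            rw [Nat.mul_comm]; exact nat_aux n k hk1 hkn
          exact_mod_cast hnat
        refine (mul_le_mul_right hcast _).trans ?_
        rw [ENNReal.inv_mul_cancel (by exact_mod_cast (Nat.choose_pos hkn).ne')
          (ENNReal.natCast_ne_top _)]


end
end

section
/- Let f : ℝⁿ → ℝ ∪ {−∞} be measurable and bounded from above with Z := ∫_{ℝⁿ} e^f dx ∈ (0, ∞), and define P(dx) = Z⁻¹e^{f(x)}dx. Then sup over all probability measures Q on ℝⁿ of (∫ f dQ − H(Q)) = log Z ∈ (−∞, ∞), and the following are equivalent: (1) H(P) < ∞; (2) the supremum is attained uniquely by P; (3) there exists a maximizer. -/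
open MeasureTheory Real Filter Topology
open scoped ENNReal NNReal BigOperators Classical

set_option linter.unusedSectionVars false
set_option linter.unusedVariables false
set_option linter.unnecessarySimpa false

noncomputable section

/-- The exponential of an extended real number, valued in `ℝ≥0∞`. -/
def expE (z : EReal) : ℝ≥0∞ :=
  if z = ⊥ then 0 else if z = ⊤ then ⊤ else ENNReal.ofReal (Real.exp z.toReal)

/-- The positive part of an extended real number, valued in `ℝ≥0∞`. -/
def ePos (z : EReal) : ℝ≥0∞ := if z = ⊤ then ⊤ else ENNReal.ofReal z.toReal

/-- The integral `∫ f dQ` of an `(ℝ ∪ {±∞})`-valued function, with values in the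
extended reals (well-defined in `[−∞, ∞)` when `f` is bounded above). -/
def intEE {α : Type*} [MeasurableSpace α] (f : α → EReal) (Q : Measure α) : EReal :=
  ((∫⁻ x, ePos (f x) ∂Q : ℝ≥0∞) : EReal) - ((∫⁻ x, ePos (-f x) ∂Q : ℝ≥0∞) : EReal)

/-- The (negative) differential entropy `H(Q) = ∫ Q(x) log Q(x) dx`, `= ∞` if `Q` is not
absolutely continuous or the negative part of `Q log Q` is not integrable. -/
def Hent {α : Type*} [MeasureSpace α] (Q : Measure α) : EReal :=
  if Q ≪ (volume : Measure α) ∧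
      Integrable (fun x =>
        min ((Q.rnDeriv volume x).toReal * Real.log (Q.rnDeriv volume x).toReal) 0)
        (volume : Measure α) then
    ((∫⁻ x, ENNReal.ofReal
        ((Q.rnDeriv volume x).toReal * Real.log (Q.rnDeriv volume x).toReal)
        ∂(volume : Measure α) : ℝ≥0∞) : EReal)
      + ((∫ x, min ((Q.rnDeriv volume x).toReal * Real.log (Q.rnDeriv volume x).toReal) 0
          ∂(volume : Measure α) : ℝ) : EReal)
  else ⊤

namespace GibbsAux
lemma measurable_expE : Measurable expE := by
  unfold expE
  refine Measurable.ite (measurableSet_singleton _) measurable_const ?_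
  refine Measurable.ite (measurableSet_singleton _) measurable_const ?_
  exact (Real.measurable_exp.comp measurable_ereal_toReal).ennreal_ofReal
lemma measurable_ePos : Measurable ePos := by
  unfold ePos
  refine Measurable.ite (measurableSet_singleton _) measurable_const ?_
  exact measurable_ereal_toReal.ennreal_ofReal
lemma expE_eq {z : EReal} (hz : z ≠ ⊤) :
    expE z = if z = ⊥ then 0 else ENNReal.ofReal (Real.exp z.toReal) := by
  simp only [expE, hz, if_false]
lemma ePos_eq {z : EReal} (hz : z ≠ ⊤) : ePos z = ENNReal.ofReal z.toReal := by
  simp only [ePos, hz, if_false]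
lemma ePos_neg_eq {z : EReal} (hz : z ≠ ⊥) : ePos (-z) = ENNReal.ofReal (-z.toReal) := by
  rw [ePos_eq (by simpa using hz), EReal.toReal_neg_eq]
lemma ePos_neg_bot : ePos (-(⊥ : EReal)) = ⊤ := by simp [ePos]
lemma toReal_le_of_le {z : EReal} {C : ℝ} (h : z ≤ (C : EReal)) : z.toReal ≤ max C 0 := by
  rcases eq_or_ne z ⊥ with rfl | hbot
  · simp
  · calc z.toReal ≤ C := by
          rw [← EReal.toReal_coe C]
          exact EReal.toReal_le_toReal h hbot (EReal.coe_ne_top C)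
      _ ≤ max C 0 := le_max_left _ _

lemma f_ne_top {α : Type*} {f : α → EReal} {C : ℝ}
    (hbd : ∀ x, f x ≤ (C : EReal)) (x : α) : f x ≠ ⊤ :=
  fun h => absurd (h ▸ hbd x) (by simp)

section Setup
variable {α : Type*} [MeasureSpace α]

/-- normalizing constant -/
def Zc (f : α → EReal) : ℝ≥0∞ := ∫⁻ x, expE (f x) ∂(volume : Measure α)
/-- density of the Gibbs measure -/
def pd (f : α → EReal) : α → ℝ≥0∞ := fun x => expE (f x) / Zc f
/-- real density -/
def qd (f : α → EReal) : α → ℝ := fun x => (pd f x).toReal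

variable {f : α → EReal} {C : ℝ}

lemma expE_f_le (hbd : ∀ x, f x ≤ (C : EReal)) (x : α) :
    expE (f x) ≤ ENNReal.ofReal (Real.exp (max C 0)) := by
  rw [expE_eq (f_ne_top hbd x)]
  split_ifs
  · simp
  · exact ENNReal.ofReal_le_ofReal (Real.exp_le_exp.2 (toReal_le_of_le (hbd x)))

lemma measurable_pd (hf : Measurable f) : Measurable (pd f) :=
  (measurable_expE.comp hf).div measurable_const

lemma measurable_qd (hf : Measurable f) : Measurable (qd f) :=
  (measurable_pd hf).ennreal_toReal

lemma pd_ne_top (hbd : ∀ x, f x ≤ (C : EReal)) (hZ0 : Zc f ≠ 0) (x : α) : pd f x ≠ ⊤ := by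
  have : pd f x ≤ ENNReal.ofReal (Real.exp (max C 0)) / Zc f :=
    ENNReal.div_le_div_right (expE_f_le hbd x) _
  refine ne_top_of_le_ne_top ?_ this
  exact (ENNReal.div_lt_top ENNReal.ofReal_ne_top hZ0).ne

lemma lintegral_pd (hf : Measurable f) (hZ0 : Zc f ≠ 0) (hZtop : Zc f ≠ ⊤) :
    ∫⁻ x, pd f x ∂(volume : Measure α) = 1 := by
  simp only [pd, div_eq_mul_inv]
  rw [lintegral_mul_const' _ _ (ENNReal.inv_ne_top.2 hZ0)]
  exact ENNReal.mul_inv_cancel hZ0 hZtop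

lemma isProbability_P (hf : Measurable f) (hZ0 : Zc f ≠ 0) (hZtop : Zc f ≠ ⊤) :
    IsProbabilityMeasure ((volume : Measure α).withDensity (pd f)) := by
  constructor
  rw [withDensity_apply _ MeasurableSet.univ, Measure.restrict_univ]
  exact lintegral_pd hf hZ0 hZtop

lemma pd_eq_zero_iff (hbd : ∀ x, f x ≤ (C : EReal)) (hZtop : Zc f ≠ ⊤) (x : α) :
    pd f x = 0 ↔ f x = ⊥ := by
  rw [pd, ENNReal.div_eq_zero_iff]
  simp only [hZtop, or_false]
  rw [expE_eq (f_ne_top hbd x)]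
  split_ifs with h
  · simp [h]
  · simp only [h, iff_false]
    simp [ENNReal.ofReal_eq_zero, not_le, Real.exp_pos]

lemma Zc_toReal_pos (hZ0 : Zc f ≠ 0) (hZtop : Zc f ≠ ⊤) : 0 < (Zc f).toReal :=
  ENNReal.toReal_pos hZ0 hZtop

lemma qd_eq (hbd : ∀ x, f x ≤ (C : EReal)) {x : α} (hx : f x ≠ ⊥) :
    qd f x = Real.exp ((f x).toReal) / (Zc f).toReal := by
  rw [qd, pd, expE_eq (f_ne_top hbd x), if_neg hx, ENNReal.toReal_div,
    ENNReal.toReal_ofReal (Real.exp_pos _).le]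

lemma qd_eq_zero (hbd : ∀ x, f x ≤ (C : EReal)) {x : α} (hx : f x = ⊥) : qd f x = 0 := by
  rw [qd, pd, expE_eq (f_ne_top hbd x), if_pos hx, ENNReal.zero_div, ENNReal.toReal_zero]

lemma qd_pos (hbd : ∀ x, f x ≤ (C : EReal)) (hZ0 : Zc f ≠ 0) (hZtop : Zc f ≠ ⊤)
    {x : α} (hx : f x ≠ ⊥) : 0 < qd f x := by
  rw [qd_eq hbd hx]
  exact div_pos (Real.exp_pos _) (Zc_toReal_pos hZ0 hZtop)

lemma log_qd (hbd : ∀ x, f x ≤ (C : EReal)) (hZ0 : Zc f ≠ 0) (hZtop : Zc f ≠ ⊤)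
    {x : α} (hx : f x ≠ ⊥) :
    Real.log (qd f x) = (f x).toReal - Real.log (Zc f).toReal := by
  rw [qd_eq hbd hx, Real.log_div (Real.exp_ne_zero _) (Zc_toReal_pos hZ0 hZtop).ne',
    Real.log_exp]

end Setup


lemma ofReal_eq_ofReal_max (t : ℝ) : ENNReal.ofReal t = ENNReal.ofReal (max t 0) := by
  rcases le_total t 0 with h | h
  · rw [ENNReal.ofReal_eq_zero.2 h, max_eq_right h]; simp
  · rw [max_eq_left h]

section HentLemmas
variable {α : Type*} [MeasureSpace α] [SigmaFinite (volume : Measure α)] {Q : Measure α}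

/-- the entropy integrand -/
def entg (Q : Measure α) : α → ℝ :=
  fun x => (Q.rnDeriv volume x).toReal * Real.log (Q.rnDeriv volume x).toReal

lemma measurable_entg (Q : Measure α) : Measurable (entg Q) :=
  ((Measure.measurable_rnDeriv Q volume).ennreal_toReal).mul
    ((Measure.measurable_rnDeriv Q volume).ennreal_toReal.log)

lemma integrable_min_of_integrable (hg : Integrable (entg Q) (volume : Measure α)) :
    Integrable (fun x => min (entg Q x) 0) (volume : Measure α) := by
  refine hg.mono ((measurable_entg Q).min measurable_const).aestronglyMeasurable ?_
  filter_upwards with x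
  simp only [Real.norm_eq_abs]
  rcases le_total (entg Q x) 0 with h | h
  · rw [min_eq_left h]
  · rw [min_eq_right h]; simp [abs_nonneg]

lemma integrable_max_of_integrable (hg : Integrable (entg Q) (volume : Measure α)) :
    Integrable (fun x => max (entg Q x) 0) (volume : Measure α) := by
  refine hg.mono ((measurable_entg Q).max measurable_const).aestronglyMeasurable ?_
  filter_upwards with x
  simp only [Real.norm_eq_abs]
  rcases le_total (entg Q x) 0 with h | h
  · rw [max_eq_right h]; simp [abs_nonneg]
  · rw [max_eq_left h]

lemma hent_eq_integral (hAC : Q ≪ (volume : Measure α))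
    (hg : Integrable (entg Q) (volume : Measure α)) :
    Hent Q = ((∫ x, entg Q x ∂(volume : Measure α) : ℝ) : EReal) := by
  have hmin := integrable_min_of_integrable hg
  have hmax := integrable_max_of_integrable hg
  simp only [entg] at hmin hmax ⊢
  rw [Hent, if_pos ⟨hAC, hmin⟩]
  have h1 : (∫⁻ x, ENNReal.ofReal
        ((Q.rnDeriv volume x).toReal * Real.log (Q.rnDeriv volume x).toReal)
        ∂(volume : Measure α))
      = ENNReal.ofReal (∫ x,
        max ((Q.rnDeriv volume x).toReal * Real.log (Q.rnDeriv volume x).toReal) 0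
        ∂(volume : Measure α)) := by
    rw [ofReal_integral_eq_lintegral_ofReal hmax
      (Filter.Eventually.of_forall fun x => le_max_right _ _)]
    exact lintegral_congr fun x => ofReal_eq_ofReal_max _
  have hnn : (0:ℝ) ≤ ∫ x,
      max ((Q.rnDeriv volume x).toReal * Real.log (Q.rnDeriv volume x).toReal) 0
      ∂(volume : Measure α) := integral_nonneg fun x => le_max_right _ _
  rw [h1, EReal.coe_ennreal_ofReal, max_eq_left hnn, ← EReal.coe_add,
    ← integral_add hmax hmin]
  norm_cast
  exact integral_congr_ae (Filter.Eventually.of_forall fun x => by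
    simpa using max_add_min ((Q.rnDeriv volume x).toReal * Real.log (Q.rnDeriv volume x).toReal) 0)

lemma hent_ne_top (hQ : Hent Q ≠ ⊤) :
    Q ≪ (volume : Measure α) ∧ Integrable (entg Q) (volume : Measure α) := by
  rw [Hent] at hQ
  by_cases hb : Q ≪ (volume : Measure α) ∧
      Integrable (fun x =>
        min ((Q.rnDeriv volume x).toReal * Real.log (Q.rnDeriv volume x).toReal) 0)
        (volume : Measure α)
  · refine ⟨hb.1, ?_⟩
    rw [if_pos hb] at hQ
    have hLtop : (∫⁻ x, ENNReal.ofReal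
        ((Q.rnDeriv volume x).toReal * Real.log (Q.rnDeriv volume x).toReal)
        ∂(volume : Measure α)) ≠ ⊤ := by
      intro h
      rw [h] at hQ
      exact hQ (by rw [EReal.coe_ennreal_top, EReal.top_add_coe])
    have hmax : Integrable
        (fun x => max ((Q.rnDeriv volume x).toReal * Real.log (Q.rnDeriv volume x).toReal) 0)
        (volume : Measure α) := by
      refine ⟨((measurable_entg Q).max measurable_const).aestronglyMeasurable, ?_⟩
      have h0 : 0 ≤ᵐ[(volume : Measure α)] (fun x =>
          max ((Q.rnDeriv volume x).toReal * Real.log (Q.rnDeriv volume x).toReal) 0) :=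
        Filter.Eventually.of_forall fun x => le_max_right _ _
      rw [hasFiniteIntegral_iff_ofReal h0]
      refine lt_of_le_of_lt (le_of_eq (lintegral_congr fun x =>
        (ofReal_eq_ofReal_max _).symm)) hLtop.lt_top
    have h2 := hmax.add hb.2
    have he : (fun x => max ((Q.rnDeriv volume x).toReal * Real.log (Q.rnDeriv volume x).toReal) 0
        + min ((Q.rnDeriv volume x).toReal * Real.log (Q.rnDeriv volume x).toReal) 0)
        =ᵐ[(volume : Measure α)] entg Q := Filter.Eventually.of_forall fun x => by
      have h3 := max_add_min
        ((Q.rnDeriv volume x).toReal * Real.log (Q.rnDeriv volume x).toReal) 0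
      rw [add_zero] at h3
      exact h3
    exact h2.congr he
  · rw [if_neg hb] at hQ; exact absurd rfl hQ

end HentLemmas


section IntEELemmas
variable {α : Type*} [MeasurableSpace α] {f : α → EReal} {C : ℝ}

lemma lintegral_ePos_ne_top (hbd : ∀ x, f x ≤ (C : EReal)) (Q : Measure α)
    [IsFiniteMeasure Q] : ∫⁻ x, ePos (f x) ∂Q ≠ ⊤ := by
  have h : ∀ x, ePos (f x) ≤ ENNReal.ofReal (max C 0) := fun x => by
    rw [ePos_eq (f_ne_top hbd x)]
    exact ENNReal.ofReal_le_ofReal (toReal_le_of_le (hbd x))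
  refine ne_top_of_le_ne_top ?_ (lintegral_mono h)
  rw [lintegral_const]
  exact ENNReal.mul_ne_top ENNReal.ofReal_ne_top (measure_ne_top Q _)

lemma ae_ne_bot {Q : Measure α} (hf : Measurable f)
    (h : ∫⁻ x, ePos (-f x) ∂Q ≠ ⊤) : ∀ᵐ x ∂Q, f x ≠ ⊥ := by
  have hs : MeasurableSet {x | f x = ⊥} := hf (measurableSet_singleton ⊥)
  rw [ae_iff]
  simp only [not_not]
  by_contra h0
  apply h
  rw [eq_top_iff]
  calc (⊤:ℝ≥0∞) = ∫⁻ x in {x | f x = ⊥}, ⊤ ∂Q := by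
        rw [setLIntegral_const, ENNReal.top_mul h0]
    _ = ∫⁻ x in {x | f x = ⊥}, ePos (-f x) ∂Q := by
        refine setLIntegral_congr_fun hs (fun x hx => ?_)
        rw [Set.mem_setOf_eq] at hx
        show (⊤:ℝ≥0∞) = ePos (-f x)
        rw [hx, ePos_neg_bot]
    _ ≤ ∫⁻ x, ePos (-f x) ∂Q := setLIntegral_le_lintegral _ _

lemma integrable_toReal_f (hf : Measurable f) (hbd : ∀ x, f x ≤ (C : EReal))
    {Q : Measure α} [IsFiniteMeasure Q] (h : ∫⁻ x, ePos (-f x) ∂Q ≠ ⊤) :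
    Integrable (fun x => (f x).toReal) Q := by
  refine ⟨(hf.ereal_toReal).aestronglyMeasurable, ?_⟩
  rw [hasFiniteIntegral_iff_norm]
  have hb : ∀ x, ENNReal.ofReal ‖(f x).toReal‖
      ≤ ENNReal.ofReal (max C 0) + ePos (-f x) := by
    intro x
    rcases eq_or_ne (f x) ⊥ with hx | hx
    · simp [hx]
    · rw [ePos_neg_eq hx, Real.norm_eq_abs]
      have habs : |(f x).toReal| ≤ max ((f x).toReal) 0 + max (-(f x).toReal) 0 := by
        rcases le_total ((f x).toReal) 0 with h' | h'
        · rw [abs_of_nonpos h', max_eq_right h', max_eq_left (neg_nonneg.2 h')]; linarith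
        · rw [abs_of_nonneg h', max_eq_left h', max_eq_right (neg_nonpos.2 h')]; linarith
      calc ENNReal.ofReal |(f x).toReal|
          ≤ ENNReal.ofReal (max ((f x).toReal) 0 + max (-(f x).toReal) 0) :=
            ENNReal.ofReal_le_ofReal habs
        _ ≤ ENNReal.ofReal (max ((f x).toReal) 0) + ENNReal.ofReal (max (-(f x).toReal) 0) :=
            ENNReal.ofReal_add_le
        _ ≤ ENNReal.ofReal (max C 0) + ENNReal.ofReal (-(f x).toReal) := by
            refine add_le_add (ENNReal.ofReal_le_ofReal
              (max_le (toReal_le_of_le (hbd x)) (le_max_right C 0))) ?_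
            exact le_of_eq (ofReal_eq_ofReal_max _).symm
  refine ne_top_of_le_ne_top ?_ (lintegral_mono hb) |>.lt_top
  rw [lintegral_add_left measurable_const, lintegral_const]
  exact ENNReal.add_ne_top.2 ⟨ENNReal.mul_ne_top ENNReal.ofReal_ne_top (measure_ne_top Q _), h⟩

lemma max_sub_max_neg (t : ℝ) : max t 0 - max (-t) 0 = t := by
  rcases le_total t 0 with h | h
  · rw [max_eq_right h, max_eq_left (neg_nonneg.2 h)]; ring
  · rw [max_eq_left h, max_eq_right (neg_nonpos.2 h)]; ring

lemma intEE_eq_integral (hf : Measurable f) (hbd : ∀ x, f x ≤ (C : EReal))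
    {Q : Measure α} [IsFiniteMeasure Q]
    (hbot : ∀ᵐ x ∂Q, f x ≠ ⊥) (hInt : Integrable (fun x => (f x).toReal) Q) :
    intEE f Q = ((∫ x, (f x).toReal ∂Q : ℝ) : EReal) := by
  have hmeas : Measurable (fun x => (f x).toReal) := hf.ereal_toReal
  have hmax : Integrable (fun x => max ((f x).toReal) 0) Q := by
    refine hInt.mono (hmeas.max measurable_const).aestronglyMeasurable
      (Filter.Eventually.of_forall fun x => ?_)
    simp only [Real.norm_eq_abs]
    rcases le_total ((f x).toReal) 0 with h | h
    · rw [max_eq_right h]; simp [abs_nonneg]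
    · rw [max_eq_left h]
  have hmaxneg : Integrable (fun x => max (-(f x).toReal) 0) Q := by
    refine hInt.mono ((hmeas.neg).max measurable_const).aestronglyMeasurable
      (Filter.Eventually.of_forall fun x => ?_)
    simp only [Real.norm_eq_abs]
    rcases le_total ((f x).toReal) 0 with h | h
    · rw [max_eq_left (neg_nonneg.2 h), abs_neg]
    · rw [max_eq_right (neg_nonpos.2 h)]; simp [abs_nonneg]
  have h1 : ∫⁻ x, ePos (f x) ∂Q = ENNReal.ofReal (∫ x, max ((f x).toReal) 0 ∂Q) := by
    rw [ofReal_integral_eq_lintegral_ofReal hmax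
      (Filter.Eventually.of_forall fun x => le_max_right _ _)]
    refine lintegral_congr fun x => ?_
    rw [ePos_eq (f_ne_top hbd x)]
    exact ofReal_eq_ofReal_max _
  have h2 : ∫⁻ x, ePos (-f x) ∂Q = ENNReal.ofReal (∫ x, max (-(f x).toReal) 0 ∂Q) := by
    rw [ofReal_integral_eq_lintegral_ofReal hmaxneg
      (Filter.Eventually.of_forall fun x => le_max_right _ _)]
    refine lintegral_congr_ae (hbot.mono fun x hx => ?_)
    show ePos (-f x) = ENNReal.ofReal (max (-(f x).toReal) 0)
    rw [ePos_neg_eq hx]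
    exact ofReal_eq_ofReal_max _
  have hnn1 : (0:ℝ) ≤ ∫ x, max ((f x).toReal) 0 ∂Q := integral_nonneg fun x => le_max_right _ _
  have hnn2 : (0:ℝ) ≤ ∫ x, max (-(f x).toReal) 0 ∂Q := integral_nonneg fun x => le_max_right _ _
  rw [intEE, h1, h2, EReal.coe_ennreal_ofReal, EReal.coe_ennreal_ofReal,
    max_eq_left hnn1, max_eq_left hnn2, ← EReal.coe_sub, ← integral_sub hmax hmaxneg]
  norm_cast
  exact integral_congr_ae (Filter.Eventually.of_forall fun x => max_sub_max_neg _)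

end IntEELemmas

section Gibbs

lemma gibbs_ineq {a b : ℝ} (ha : 0 ≤ a) (hb : 0 < b) :
    0 ≤ a * Real.log a - a * Real.log b - a + b := by
  rcases eq_or_lt_of_le ha with rfl | ha'
  · simpa using hb.le
  · have h := Real.log_le_sub_one_of_pos (div_pos hb ha')
    rw [Real.log_div hb.ne' ha'.ne'] at h
    have h2 : a * (Real.log b - Real.log a) ≤ a * (b / a - 1) :=
      mul_le_mul_of_nonneg_left h ha
    have h3 : a * (b / a - 1) = b - a := by field_simp
    rw [h3] at h2
    nlinarith

lemma gibbs_eq {a b : ℝ} (ha : 0 ≤ a) (hb : 0 < b)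
    (h : a * Real.log a - a * Real.log b - a + b = 0) : a = b := by
  by_contra hne
  rcases eq_or_lt_of_le ha with rfl | ha'
  · simp only [zero_mul, sub_zero, zero_sub, neg_add_eq_zero] at h
    simp at h
    exact hb.ne' (by linarith)
  · have hd : b / a ≠ 1 := by
      intro h1
      exact hne (by field_simp at h1; linarith)
    have hlt := Real.log_lt_sub_one_of_pos (div_pos hb ha') hd
    rw [Real.log_div hb.ne' ha'.ne'] at hlt
    have h2 : a * (Real.log b - Real.log a) < a * (b / a - 1) :=
      mul_lt_mul_of_pos_left hlt ha'
    have h3 : a * (b / a - 1) = b - a := by field_simp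
    rw [h3] at h2
    nlinarith

end Gibbs
section KeyIneq
variable {α : Type*} [MeasureSpace α] [SigmaFinite (volume : Measure α)]
variable {f : α → EReal} {C : ℝ}

lemma key_ineq (hf : Measurable f) (hbd : ∀ x, f x ≤ (C : EReal))
    (hZ0 : Zc f ≠ 0) (hZtop : Zc f ≠ ⊤)
    {Q : Measure α} [IsProbabilityMeasure Q]
    (hAC : Q ≪ (volume : Measure α))
    (hg : Integrable (entg Q) (volume : Measure α))
    (hnegtop : ∫⁻ x, ePos (-f x) ∂Q ≠ ⊤) :
    ((∫ x, (f x).toReal ∂Q) - (∫ x, entg Q x ∂(volume : Measure α))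
        ≤ Real.log (Zc f).toReal)
    ∧ ((∫ x, (f x).toReal ∂Q) - (∫ x, entg Q x ∂(volume : Measure α))
          = Real.log (Zc f).toReal →
        Q = (volume : Measure α).withDensity (pd f)) := by
  classical
  set μ : Measure α := (volume : Measure α) with hμ
  set ρ : α → ℝ := fun x => (Q.rnDeriv μ x).toReal with hρ
  have hρmeas : Measurable ρ := (Measure.measurable_rnDeriv Q μ).ennreal_toReal
  have hbotQ : ∀ᵐ x ∂Q, f x ≠ ⊥ := ae_ne_bot hf hnegtop
  have hsmeas : MeasurableSet {x | f x = ⊥} := hf (measurableSet_singleton ⊥)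
  have hQs : Q {x | f x = ⊥} = 0 := by
    rw [ae_iff] at hbotQ; simpa using hbotQ
  have hbotμ : ∀ᵐ x ∂μ, f x = ⊥ → Q.rnDeriv μ x = 0 := by
    have h1 : ∫⁻ x in {x | f x = ⊥}, Q.rnDeriv μ x ∂μ = 0 := by
      rw [Measure.setLIntegral_rnDeriv' hAC hsmeas, hQs]
    exact (setLIntegral_eq_zero_iff hsmeas (Measure.measurable_rnDeriv Q μ)).1 h1
  have hQint : Integrable (fun x => (f x).toReal) Q := integrable_toReal_f hf hbd hnegtop
  -- transfer the f-integral to μ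
  have hI : ∫ x, ρ x * (f x).toReal ∂μ = ∫ x, (f x).toReal ∂Q := by
    have := integral_rnDeriv_smul hAC (f := fun x => (f x).toReal)
    simpa [smul_eq_mul] using this
  have hIint : Integrable (fun x => ρ x * (f x).toReal) μ := by
    have := (integrable_rnDeriv_smul_iff hAC (f := fun x => (f x).toReal)).2 hQint
    simpa [smul_eq_mul] using this
  have hρint : Integrable ρ μ := Measure.integrable_toReal_rnDeriv
  have hρone : ∫ x, ρ x ∂μ = 1 := by
    rw [integral_toReal (Measure.measurable_rnDeriv Q μ).aemeasurable (Measure.rnDeriv_lt_top Q μ),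
      Measure.lintegral_rnDeriv hAC]
    simp
  have hqmeas : Measurable (qd f) := measurable_qd hf
  have hqint : Integrable (qd f) μ :=
    integrable_toReal_of_lintegral_ne_top (measurable_pd hf).aemeasurable
      (by rw [lintegral_pd hf hZ0 hZtop]; exact ENNReal.one_ne_top)
  have hqone : ∫ x, qd f x ∂μ = 1 := by
    simp only [qd]
    rw [integral_toReal (measurable_pd hf).aemeasurable
      (Filter.Eventually.of_forall fun x => lt_top_iff_ne_top.2 (pd_ne_top hbd hZ0 x)),
      lintegral_pd hf hZ0 hZtop]
    simp
  set LZ : ℝ := Real.log (Zc f).toReal with hLZ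
  set h : α → ℝ := fun x =>
    entg Q x - ρ x * (f x).toReal + ρ x * LZ - ρ x + qd f x with hh
  have i1 : Integrable (fun x => entg Q x - ρ x * (f x).toReal) μ := hg.sub hIint
  have i2 : Integrable (fun x => ρ x * LZ) μ := hρint.mul_const LZ
  have i3 : Integrable (fun x => entg Q x - ρ x * (f x).toReal + ρ x * LZ) μ := i1.add i2
  have i4 : Integrable (fun x => entg Q x - ρ x * (f x).toReal + ρ x * LZ - ρ x) μ :=
    i3.sub hρint
  have hhint : Integrable h μ := i4.add hqint
  have hptwise : ∀ x, (f x = ⊥ → Q.rnDeriv μ x = 0) →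
      (0 ≤ h x ∧ (h x = 0 → ρ x = qd f x)) := by
    intro x hx
    rcases eq_or_ne (f x) ⊥ with hfx | hfx
    · have hρ0 : ρ x = 0 := by simp [hρ, hx hfx]
      have hq0 : qd f x = 0 := qd_eq_zero hbd hfx
      have hent0 : entg Q x = 0 := by simp [entg, show Q.rnDeriv volume x = 0 from hx hfx]
      constructor
      · simp [hh, hent0, hρ0, hq0]
      · intro _; rw [hρ0, hq0]
    · have hbpos : 0 < qd f x := qd_pos hbd hZ0 hZtop hfx
      have hlogq : Real.log (qd f x) = (f x).toReal - LZ := log_qd hbd hZ0 hZtop hfx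
      have hfval : (f x).toReal = Real.log (qd f x) + LZ := by rw [hlogq]; ring
      have he : h x = ρ x * Real.log (ρ x) - ρ x * Real.log (qd f x)
          - ρ x + qd f x := by
        rw [hh]; simp only [entg]
        rw [hfval]; rw [hρ]; ring
      constructor
      · rw [he]; exact gibbs_ineq ENNReal.toReal_nonneg hbpos
      · intro h0; rw [he] at h0
        exact gibbs_eq ENNReal.toReal_nonneg hbpos h0
  have hnn : 0 ≤ᵐ[μ] h := by
    filter_upwards [hbotμ] with x hx
    exact (hptwise x hx).1
  have hint_h : ∫ x, h x ∂μ
      = (∫ x, entg Q x ∂μ) - (∫ x, (f x).toReal ∂Q) + LZ := by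
    simp only [hh]
    rw [integral_add i4 hqint, integral_sub i3 hρint, integral_add i1 i2,
      integral_sub hg hIint, integral_mul_const LZ ρ, hρone, hqone, hI]
    ring
  have hnonneg : 0 ≤ ∫ x, h x ∂μ := integral_nonneg_of_ae hnn
  constructor
  · rw [hint_h] at hnonneg; linarith
  · intro heq
    have hzero : ∫ x, h x ∂μ = 0 := by rw [hint_h]; linarith
    have hae0 : h =ᵐ[μ] 0 := (integral_eq_zero_iff_of_nonneg_ae hnn hhint).1 hzero
    have haeeq : Q.rnDeriv μ =ᵐ[μ] pd f := by
      filter_upwards [hbotμ, hae0, Measure.rnDeriv_lt_top Q μ] with x hx h0 htop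
      have : ρ x = qd f x := (hptwise x hx).2 h0
      rw [hρ] at this
      exact (ENNReal.toReal_eq_toReal_iff' htop.ne (pd_ne_top hbd hZ0 x)).1 this
    calc Q = μ.withDensity (Q.rnDeriv μ) := (Measure.withDensity_rnDeriv_eq Q μ hAC).symm
      _ = μ.withDensity (pd f) := withDensity_congr_ae haeeq

end KeyIneq
section ValueFormula
variable {α : Type*} [MeasureSpace α] [SigmaFinite (volume : Measure α)]
variable {f : α → EReal} {C : ℝ}

lemma qd_integrable (hf : Measurable f) (hbd : ∀ x, f x ≤ (C : EReal))
    (hZ0 : Zc f ≠ 0) (hZtop : Zc f ≠ ⊤) :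
    Integrable (qd f) (volume : Measure α) :=
  integrable_toReal_of_lintegral_ne_top (measurable_pd hf).aemeasurable
    (by rw [lintegral_pd hf hZ0 hZtop]; exact ENNReal.one_ne_top)

lemma qd_one (hf : Measurable f) (hbd : ∀ x, f x ≤ (C : EReal))
    (hZ0 : Zc f ≠ 0) (hZtop : Zc f ≠ ⊤) :
    ∫ x, qd f x ∂(volume : Measure α) = 1 := by
  simp only [qd]
  rw [integral_toReal (measurable_pd hf).aemeasurable
    (Filter.Eventually.of_forall fun x => lt_top_iff_ne_top.2 (pd_ne_top hbd hZ0 x)),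
    lintegral_pd hf hZ0 hZtop]
  simp

lemma value_formula (hf : Measurable f) (hbd : ∀ x, f x ≤ (C : EReal))
    {r : α → ℝ≥0∞} (hr : Measurable r) (hrtop : ∀ x, r x ≠ ⊤)
    (hr1 : ∫⁻ x, r x ∂(volume : Measure α) = 1)
    (hbot : ∀ x, f x = ⊥ → r x = 0)
    (hii : Integrable (fun x => (r x).toReal * Real.log (r x).toReal) (volume : Measure α))
    (hiii : Integrable (fun x => (r x).toReal * (f x).toReal) (volume : Measure α)) :
    IsProbabilityMeasure ((volume : Measure α).withDensity r) ∧
    intEE f ((volume : Measure α).withDensity r) - Hent ((volume : Measure α).withDensity r)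
      = ((∫ x, ((r x).toReal * (f x).toReal - (r x).toReal * Real.log (r x).toReal)
          ∂(volume : Measure α) : ℝ) : EReal) := by
  classical
  set μ : Measure α := (volume : Measure α) with hμ
  set Q : Measure α := μ.withDensity r with hQ
  have hprob : IsProbabilityMeasure Q := by
    constructor
    rw [hQ, withDensity_apply _ MeasurableSet.univ, Measure.restrict_univ, hr1]
  refine ⟨hprob, ?_⟩
  have hrn : Q.rnDeriv μ =ᵐ[μ] r := Measure.rnDeriv_withDensity μ hr
  have hentg_eq : entg Q =ᵐ[μ] fun x => (r x).toReal * Real.log (r x).toReal := by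
    filter_upwards [hrn] with x hx
    simp only [entg, show Q.rnDeriv volume x = r x from hx]
  have hgint : Integrable (entg Q) μ := hii.congr hentg_eq.symm
  have hHent : Hent Q = ((∫ x, (r x).toReal * Real.log (r x).toReal ∂μ : ℝ) : EReal) := by
    rw [hent_eq_integral (withDensity_absolutelyContinuous μ r) hgint]
    exact congrArg _ (integral_congr_ae hentg_eq)
  have hmeasf : Measurable (fun x => (f x).toReal) := hf.ereal_toReal
  have hsmeas : Measurable (fun x => (r x).toReal) := hr.ennreal_toReal
  have hmax : Integrable (fun x => (r x).toReal * max ((f x).toReal) 0) μ := by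
    refine hiii.mono (hsmeas.mul (hmeasf.max measurable_const)).aestronglyMeasurable
      (Filter.Eventually.of_forall fun x => ?_)
    simp only [Real.norm_eq_abs, abs_mul]
    refine mul_le_mul_of_nonneg_left ?_ (abs_nonneg _)
    rcases le_total ((f x).toReal) 0 with h' | h'
    · rw [max_eq_right h']; simp [abs_nonneg]
    · rw [max_eq_left h', abs_of_nonneg h']
  have hmaxneg : Integrable (fun x => (r x).toReal * max (-(f x).toReal) 0) μ := by
    refine hiii.mono (hsmeas.mul (hmeasf.neg.max measurable_const)).aestronglyMeasurable
      (Filter.Eventually.of_forall fun x => ?_)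
    simp only [Real.norm_eq_abs, abs_mul]
    refine mul_le_mul_of_nonneg_left ?_ (abs_nonneg _)
    rcases le_total ((f x).toReal) 0 with h' | h'
    · rw [max_eq_left (neg_nonneg.2 h'), abs_neg, abs_of_nonpos h']
    · rw [max_eq_right (neg_nonpos.2 h')]; simp [abs_nonneg]
  have h1 : ∫⁻ x, ePos (f x) ∂Q
      = ENNReal.ofReal (∫ x, (r x).toReal * max ((f x).toReal) 0 ∂μ) := by
    have hm1 : Measurable (fun x => ePos (f x)) := measurable_ePos.comp hf
    rw [hQ, lintegral_withDensity_eq_lintegral_mul μ hr hm1]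
    rw [ofReal_integral_eq_lintegral_ofReal hmax (Filter.Eventually.of_forall fun x =>
      mul_nonneg ENNReal.toReal_nonneg (le_max_right _ _))]
    refine lintegral_congr fun x => ?_
    show r x * ePos (f x) = _
    rw [ePos_eq (f_ne_top hbd x), ofReal_eq_ofReal_max ((f x).toReal),
      ENNReal.ofReal_mul ENNReal.toReal_nonneg, ENNReal.ofReal_toReal (hrtop x)]
  have h2 : ∫⁻ x, ePos (-f x) ∂Q
      = ENNReal.ofReal (∫ x, (r x).toReal * max (-(f x).toReal) 0 ∂μ) := by
    have hm2 : Measurable (fun x => ePos (-f x)) :=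
      measurable_ePos.comp (measurable_neg.comp hf)
    rw [hQ, lintegral_withDensity_eq_lintegral_mul μ hr hm2]
    rw [ofReal_integral_eq_lintegral_ofReal hmaxneg (Filter.Eventually.of_forall fun x =>
      mul_nonneg ENNReal.toReal_nonneg (le_max_right _ _))]
    refine lintegral_congr fun x => ?_
    show r x * ePos (-f x) = _
    rcases eq_or_ne (f x) ⊥ with hx | hx
    · rw [hbot x hx]
      simp
    · rw [ePos_neg_eq hx, ofReal_eq_ofReal_max (-(f x).toReal),
        ENNReal.ofReal_mul ENNReal.toReal_nonneg, ENNReal.ofReal_toReal (hrtop x)]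
  have hintEE : intEE f Q = ((∫ x, (r x).toReal * (f x).toReal ∂μ : ℝ) : EReal) := by
    have hnn1 : (0:ℝ) ≤ ∫ x, (r x).toReal * max ((f x).toReal) 0 ∂μ :=
      integral_nonneg fun x => mul_nonneg ENNReal.toReal_nonneg (le_max_right _ _)
    have hnn2 : (0:ℝ) ≤ ∫ x, (r x).toReal * max (-(f x).toReal) 0 ∂μ :=
      integral_nonneg fun x => mul_nonneg ENNReal.toReal_nonneg (le_max_right _ _)
    rw [intEE, h1, h2, EReal.coe_ennreal_ofReal, EReal.coe_ennreal_ofReal,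
      max_eq_left hnn1, max_eq_left hnn2, ← EReal.coe_sub, ← integral_sub hmax hmaxneg]
    norm_cast
    refine integral_congr_ae (Filter.Eventually.of_forall fun x => ?_)
    show (r x).toReal * max ((f x).toReal) 0 - (r x).toReal * max (-(f x).toReal) 0
        = (r x).toReal * (f x).toReal
    rw [← mul_sub, max_sub_max_neg]
  rw [hintEE, hHent, ← EReal.coe_sub, ← integral_sub hiii hii]

lemma value_at_P (hf : Measurable f) (hbd : ∀ x, f x ≤ (C : EReal))
    (hZ0 : Zc f ≠ 0) (hZtop : Zc f ≠ ⊤)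
    (hP : Hent ((volume : Measure α).withDensity (pd f)) ≠ ⊤) :
    intEE f ((volume : Measure α).withDensity (pd f))
      - Hent ((volume : Measure α).withDensity (pd f))
      = ((Real.log (Zc f).toReal : ℝ) : EReal) := by
  classical
  set μ : Measure α := (volume : Measure α) with hμ
  obtain ⟨hAC, hg⟩ := hent_ne_top hP
  have hrn : (μ.withDensity (pd f)).rnDeriv μ =ᵐ[μ] pd f :=
    Measure.rnDeriv_withDensity μ (measurable_pd hf)
  have hentg_eq : entg (μ.withDensity (pd f)) =ᵐ[μ]
      fun x => qd f x * Real.log (qd f x) := by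
    filter_upwards [hrn] with x hx
    simp only [entg, qd, show (μ.withDensity (pd f)).rnDeriv volume x = pd f x from hx]
  have hii : Integrable (fun x => qd f x * Real.log (qd f x)) μ := hg.congr hentg_eq
  set LZ : ℝ := Real.log (Zc f).toReal with hLZ
  have hqint : Integrable (qd f) μ := qd_integrable hf hbd hZ0 hZtop
  have hident : ∀ x, qd f x * (f x).toReal = qd f x * Real.log (qd f x) + LZ * qd f x := by
    intro x
    rcases eq_or_ne (f x) ⊥ with hx | hx
    · rw [qd_eq_zero hbd hx]; ring
    · rw [log_qd hbd hZ0 hZtop hx]; ring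
  have hiii : Integrable (fun x => qd f x * (f x).toReal) μ := by
    refine ((hii.add (hqint.const_mul LZ)).congr ?_)
    exact Filter.Eventually.of_forall fun x => (hident x).symm
  have hval := (value_formula hf hbd (measurable_pd hf)
    (pd_ne_top hbd hZ0) (lintegral_pd hf hZ0 hZtop)
    (fun x hx => (pd_eq_zero_iff hbd hZtop x).2 hx)
    (by exact hii) (by exact hiii)).2
  rw [hval]
  have : ∫ x, (qd f x * (f x).toReal - qd f x * Real.log (qd f x)) ∂μ
      = ∫ x, LZ * qd f x ∂μ := by
    refine integral_congr_ae (Filter.Eventually.of_forall fun x => ?_)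
    show qd f x * (f x).toReal - qd f x * Real.log (qd f x) = LZ * qd f x
    have := hident x; linarith
  rw [show ∫ x, ((pd f x).toReal * (f x).toReal
        - (pd f x).toReal * Real.log (pd f x).toReal) ∂μ
      = ∫ x, (qd f x * (f x).toReal - qd f x * Real.log (qd f x)) ∂μ from rfl, this,
    integral_const_mul LZ (qd f), qd_one hf hbd hZ0 hZtop, mul_one]

lemma value_le (hf : Measurable f) (hbd : ∀ x, f x ≤ (C : EReal))
    (hZ0 : Zc f ≠ 0) (hZtop : Zc f ≠ ⊤)
    (Q : Measure α) [IsProbabilityMeasure Q] :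
    intEE f Q - Hent Q ≤ ((Real.log (Zc f).toReal : ℝ) : EReal) := by
  by_cases hH : Hent Q = ⊤
  · rw [hH, EReal.sub_top]; exact bot_le
  obtain ⟨hAC, hg⟩ := hent_ne_top hH
  by_cases hneg : ∫⁻ x, ePos (-f x) ∂Q = ⊤
  · rw [intEE, hneg, EReal.coe_ennreal_top, EReal.sub_top, EReal.bot_sub]
    exact bot_le
  · rw [intEE_eq_integral hf hbd (ae_ne_bot hf hneg) (integrable_toReal_f hf hbd hneg),
      hent_eq_integral hAC hg, ← EReal.coe_sub]
    exact EReal.coe_le_coe_iff.2 (key_ineq hf hbd hZ0 hZtop hAC hg hneg).1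

lemma value_eq_imp (hf : Measurable f) (hbd : ∀ x, f x ≤ (C : EReal))
    (hZ0 : Zc f ≠ 0) (hZtop : Zc f ≠ ⊤)
    (Q : Measure α) [IsProbabilityMeasure Q]
    (h : intEE f Q - Hent Q = ((Real.log (Zc f).toReal : ℝ) : EReal)) :
    Q = (volume : Measure α).withDensity (pd f) := by
  by_cases hH : Hent Q = ⊤
  · rw [hH, EReal.sub_top] at h
    exact absurd h (EReal.bot_lt_coe _).ne
  obtain ⟨hAC, hg⟩ := hent_ne_top hH
  by_cases hneg : ∫⁻ x, ePos (-f x) ∂Q = ⊤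
  · rw [intEE, hneg, EReal.coe_ennreal_top, EReal.sub_top, EReal.bot_sub] at h
    exact absurd h (EReal.bot_lt_coe _).ne
  · rw [intEE_eq_integral hf hbd (ae_ne_bot hf hneg) (integrable_toReal_f hf hbd hneg),
      hent_eq_integral hAC hg, ← EReal.coe_sub] at h
    exact (key_ineq hf hbd hZ0 hZtop hAC hg hneg).2 (EReal.coe_eq_coe_iff.1 h)

end ValueFormula
section SupGe
variable {α : Type*} [MeasureSpace α] [SigmaFinite (volume : Measure α)]
variable {f : α → EReal} {C : ℝ}

lemma sup_ge (hf : Measurable f) (hbd : ∀ x, f x ≤ (C : EReal))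
    (hZ0 : Zc f ≠ 0) (hZtop : Zc f ≠ ⊤) :
    ((Real.log (Zc f).toReal : ℝ) : EReal) ≤
      sSup {e : EReal | ∃ Q : Measure α, IsProbabilityMeasure Q ∧
        e = intEE f Q - Hent Q} := by
  classical
  set μ : Measure α := volume with hμ
  set P : Measure α := μ.withDensity (pd f) with hP
  have hPprob : IsProbabilityMeasure P := isProbability_P hf hZ0 hZtop
  set A : ℕ → Set α := fun k => {x | ((-(k:ℝ) : ℝ) : EReal) ≤ f x} ∩ spanningSets μ k with hA
  have hAmeas : ∀ k, MeasurableSet (A k) := fun k =>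
    (hf measurableSet_Ici).inter (measurableSet_spanningSets μ k)
  have hAmono : Monotone A := by
    intro k l hkl
    refine Set.inter_subset_inter ?_ (monotone_spanningSets μ hkl)
    intro x hx
    have hx' : (((-(k:ℝ)) : ℝ) : EReal) ≤ f x := hx
    show (((-(l:ℝ)) : ℝ) : EReal) ≤ f x
    exact le_trans (EReal.coe_le_coe_iff.2 (neg_le_neg (Nat.cast_le.2 hkl))) hx'
  have hsmeas : MeasurableSet {x | f x = ⊥} := hf (measurableSet_singleton ⊥)
  have hPbot : P {x | f x = ⊥} = 0 := by
    rw [hP, withDensity_apply _ hsmeas]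
    have h0 : ∫⁻ x in {x | f x = ⊥}, pd f x ∂μ = ∫⁻ x in {x | f x = ⊥}, 0 ∂μ :=
      setLIntegral_congr_fun hsmeas (fun x hx =>
        (pd_eq_zero_iff hbd hZtop x).2 hx)
    rw [h0, lintegral_zero]
  have hUnion : ⋃ k, A k = {x | f x ≠ ⊥} := by
    ext x
    simp only [hA, Set.mem_iUnion, Set.mem_inter_iff, Set.mem_setOf_eq]
    constructor
    · rintro ⟨k, hk, -⟩ hbot
      rw [hbot] at hk
      exact (EReal.bot_lt_coe _).not_ge hk
    · intro hx
      have hxt : f x = (((f x).toReal : ℝ) : EReal) := (EReal.coe_toReal (f_ne_top hbd x) hx).symm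
      obtain ⟨k2, hk2⟩ : ∃ k, x ∈ spanningSets μ k := by
        have hx2 : x ∈ ⋃ i, spanningSets μ i := by rw [iUnion_spanningSets]; trivial
        exact Set.mem_iUnion.1 hx2
      set t : ℝ := (f x).toReal with ht
      refine ⟨max ⌈|t|⌉₊ k2, ?_, monotone_spanningSets μ (le_max_right _ _) hk2⟩
      rw [hxt]
      refine EReal.coe_le_coe_iff.2 ?_
      have hM : |t| ≤ ((max ⌈|t|⌉₊ k2 : ℕ) : ℝ) :=
        le_trans (Nat.le_ceil _) (Nat.cast_le.2 (le_max_left _ _))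
      exact (abs_le.1 hM).1
  have hPU : P {x | f x ≠ ⊥} = 1 := by
    have hc : {x | f x ≠ ⊥} = {x | f x = ⊥}ᶜ := rfl
    rw [hc, measure_compl hsmeas (measure_ne_top P _), hPbot, measure_univ, tsub_zero]
  have htend : Tendsto (fun k => P (A k)) atTop (𝓝 1) := by
    have h := tendsto_measure_iUnion_atTop (μ := P) (s := A) hAmono
    rw [hUnion, hPU] at h
    exact h
  have hctend : Tendsto (fun k => (P (A k)).toReal) atTop (𝓝 1) := by
    have h := (ENNReal.tendsto_toReal ENNReal.one_ne_top).comp htend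
    simpa [Function.comp_def] using h
  have hev0 : ∀ᶠ k in atTop, P (A k) ≠ 0 := by
    have hhalf := hctend.eventually (eventually_gt_nhds (by norm_num : (1:ℝ)/2 < 1))
    filter_upwards [hhalf] with k hk h0
    rw [h0] at hk
    norm_num at hk
  set LZ : ℝ := Real.log (Zc f).toReal with hLZ
  set S : Set EReal := {e : EReal | ∃ Q : Measure α, IsProbabilityMeasure Q ∧
    e = intEE f Q - Hent Q} with hS
  have hmember : ∀ k, P (A k) ≠ 0 →
      ((LZ + Real.log (P (A k)).toReal : ℝ) : EReal) ∈ S := by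
    intro k hc0
    set c : ℝ≥0∞ := P (A k) with hc
    have hcle : c ≤ 1 := prob_le_one
    have hctop : c ≠ ⊤ := (lt_of_le_of_lt hcle ENNReal.one_lt_top).ne
    have hcrpos : 0 < c.toReal := ENNReal.toReal_pos hc0 hctop
    set r : α → ℝ≥0∞ := fun x => (A k).indicator (pd f) x / c with hr
    have hrmeas : Measurable r := ((measurable_pd hf).indicator (hAmeas k)).div measurable_const
    have hindtop : ∀ x, (A k).indicator (pd f) x ≠ ⊤ := by
      intro x
      by_cases hx : x ∈ A k
      · rw [Set.indicator_of_mem hx]; exact pd_ne_top hbd hZ0 x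
      · rw [Set.indicator_of_notMem hx]; exact ENNReal.zero_ne_top
    have hrtop : ∀ x, r x ≠ ⊤ := fun x => (ENNReal.div_lt_top (hindtop x) hc0).ne
    have hcA : ∫⁻ x in A k, pd f x ∂μ = c := by
      rw [hc, hP, withDensity_apply _ (hAmeas k)]
    have hr1 : ∫⁻ x, r x ∂μ = 1 := by
      simp only [hr, div_eq_mul_inv]
      rw [lintegral_mul_const' _ _ (ENNReal.inv_ne_top.2 hc0),
        lintegral_indicator (hAmeas k) (pd f), hcA]
      exact ENNReal.mul_inv_cancel hc0 hctop
    have hbot' : ∀ x, f x = ⊥ → r x = 0 := by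
      intro x hx
      have h0 : (A k).indicator (pd f) x = 0 := by
        by_cases hm : x ∈ A k
        · rw [Set.indicator_of_mem hm, (pd_eq_zero_iff hbd hZtop x).2 hx]
        · rw [Set.indicator_of_notMem hm]
      simp [hr, h0]
    have hsA : ∀ x ∈ A k, (r x).toReal = qd f x / c.toReal := by
      intro x hx
      rw [hr]
      simp only
      rw [Set.indicator_of_mem hx, ENNReal.toReal_div]
      rfl
    have hsnA : ∀ x, x ∉ A k → (r x).toReal = 0 := by
      intro x hx
      simp [hr, Set.indicator_of_notMem hx]
    have hfA : ∀ x ∈ A k, f x ≠ ⊥ := by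
      intro x hx hbot2
      have h1 : (((-(k:ℝ)) : ℝ) : EReal) ≤ f x := hx.1
      rw [hbot2] at h1
      exact (EReal.bot_lt_coe _).not_ge h1
    set Mb : ℝ≥0∞ := ENNReal.ofReal (Real.exp (max C 0)) / Zc f / c with hMb
    have hMbtop : Mb ≠ ⊤ :=
      (ENNReal.div_lt_top (ENNReal.div_lt_top ENNReal.ofReal_ne_top hZ0).ne hc0).ne
    have hrle : ∀ x, r x ≤ Mb := by
      intro x
      rw [hr, hMb]
      refine ENNReal.div_le_div_right ?_ c
      refine le_trans (Set.indicator_le_self _ _ x) ?_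
      exact ENNReal.div_le_div_right (expE_f_le hbd x) _
    have hsle : ∀ x, (r x).toReal ≤ Mb.toReal := fun x =>
      ENNReal.toReal_mono hMbtop (hrle x)
    have hμAk : μ (A k) ≠ ⊤ :=
      (lt_of_le_of_lt (measure_mono Set.inter_subset_right)
        (measure_spanningSets_lt_top μ k)).ne
    have hsmeas' : Measurable (fun x => (r x).toReal) := hrmeas.ennreal_toReal
    obtain ⟨B, hB⟩ := (isCompact_Icc (a := (0:ℝ)) (b := Mb.toReal)).exists_bound_of_continuousOn
      Real.continuous_mul_log.continuousOn
    have hii : Integrable (fun x => (r x).toReal * Real.log (r x).toReal) μ := by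
      have heq : (fun x => (r x).toReal * Real.log (r x).toReal)
          = (A k).indicator (fun x => (r x).toReal * Real.log (r x).toReal) := by
        funext x
        by_cases hm : x ∈ A k
        · rw [Set.indicator_of_mem hm]
        · rw [Set.indicator_of_notMem hm, hsnA x hm]; simp
      rw [heq, integrable_indicator_iff (hAmeas k)]
      refine Measure.integrableOn_of_bounded hμAk
        (hsmeas'.mul hsmeas'.log).aestronglyMeasurable (M := B) ?_
      exact Filter.Eventually.of_forall fun x => hB _ ⟨ENNReal.toReal_nonneg, hsle x⟩
    have hii2 : Integrable (fun x => (r x).toReal * (f x).toReal) μ := by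
      have heq : (fun x => (r x).toReal * (f x).toReal)
          = (A k).indicator (fun x => (r x).toReal * (f x).toReal) := by
        funext x
        by_cases hm : x ∈ A k
        · rw [Set.indicator_of_mem hm]
        · rw [Set.indicator_of_notMem hm, hsnA x hm]; simp
      rw [heq, integrable_indicator_iff (hAmeas k)]
      refine Measure.integrableOn_of_bounded hμAk
        (hsmeas'.mul hf.ereal_toReal).aestronglyMeasurable
        (M := Mb.toReal * max (k:ℝ) (max C 0)) ?_
      rw [ae_restrict_iff' (hAmeas k)]
      refine Filter.Eventually.of_forall fun x hx => ?_
      have hfb : |(f x).toReal| ≤ max (k:ℝ) (max C 0) := by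
        have h1 : (f x).toReal ≤ max C 0 := toReal_le_of_le (hbd x)
        have h2 : (-(k:ℝ)) ≤ (f x).toReal := by
          have h3 : (((-(k:ℝ)) : ℝ) : EReal) ≤ f x := hx.1
          have h4 := EReal.toReal_le_toReal h3 (EReal.coe_ne_bot _) (f_ne_top hbd x)
          rwa [EReal.toReal_coe] at h4
        rw [abs_le]
        refine ⟨?_, le_trans h1 (le_max_right _ _)⟩
        have h5 : (k:ℝ) ≤ max (k:ℝ) (max C 0) := le_max_left _ _
        linarith
      have h4 : |(r x).toReal| ≤ Mb.toReal := by
        rw [abs_of_nonneg ENNReal.toReal_nonneg]; exact hsle x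
      rw [Real.norm_eq_abs, abs_mul]
      exact mul_le_mul h4 hfb (abs_nonneg _) ENNReal.toReal_nonneg
    obtain ⟨hprob, hval⟩ := value_formula hf hbd hrmeas hrtop hr1 hbot' hii hii2
    have hsone : ∫ x, (r x).toReal ∂μ = 1 := by
      rw [integral_toReal hrmeas.aemeasurable
        (Filter.Eventually.of_forall fun x => lt_top_iff_ne_top.2 (hrtop x)), hr1]
      simp
    have hptw : ∀ x, (r x).toReal * (f x).toReal - (r x).toReal * Real.log (r x).toReal
        = (LZ + Real.log c.toReal) * (r x).toReal := by
      intro x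
      by_cases hm : x ∈ A k
      · have hq := hsA x hm
        have hfx := hfA x hm
        have hqpos := qd_pos hbd hZ0 hZtop hfx
        have hlogq := log_qd hbd hZ0 hZtop hfx
        rw [hq, Real.log_div hqpos.ne' hcrpos.ne', hlogq]
        ring
      · rw [hsnA x hm]; ring
    have hint : ∫ x, ((r x).toReal * (f x).toReal - (r x).toReal * Real.log (r x).toReal) ∂μ
        = LZ + Real.log c.toReal := by
      rw [integral_congr_ae (Filter.Eventually.of_forall hptw),
        integral_const_mul (LZ + Real.log c.toReal) (fun x => (r x).toReal), hsone, mul_one]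
    exact ⟨μ.withDensity r, hprob, by rw [hval, hint]⟩
  have htendS : Tendsto (fun k => ((LZ + Real.log (P (A k)).toReal : ℝ) : EReal)) atTop
      (𝓝 ((LZ : ℝ) : EReal)) := by
    have h1 : Tendsto (fun k => Real.log (P (A k)).toReal) atTop (𝓝 0) := by
      have h := ((Real.continuousAt_log one_ne_zero).tendsto).comp hctend
      simpa [Function.comp_def] using h
    have h2 : Tendsto (fun k => LZ + Real.log (P (A k)).toReal) atTop (𝓝 LZ) := by
      have h := h1.const_add LZ
      simpa using h
    exact (continuous_coe_real_ereal.continuousAt).tendsto.comp h2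
  refine le_of_tendsto htendS ?_
  filter_upwards [hev0] with k hk
  exact le_sSup (hmember k hk)

end SupGe
end GibbsAux

/-- Theorem 3.3, Gibbs variational principle: for measurable
`f : ℝⁿ → ℝ ∪ {−∞}` bounded above with `Z = ∫ e^f dx ∈ (0,∞)` and
`P(dx) = Z⁻¹ e^{f(x)} dx`, the supremum of `∫ f dQ − H(Q)` over probability measures
equals `log Z`, and the following are equivalent: (1) `H(P) < ∞`; (2) the supremum is
attained uniquely by `P`; (3) there exists a maximizer. -/
theorem stmt_17 (n : ℕ) (f : (Fin n → ℝ) → EReal) (hf : Measurable f)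
    (C : ℝ) (hbd : ∀ x, f x ≤ (C : EReal))
    (hZ0 : (∫⁻ x, expE (f x) ∂(volume : Measure (Fin n → ℝ))) ≠ 0)
    (hZtop : (∫⁻ x, expE (f x) ∂(volume : Measure (Fin n → ℝ))) ≠ ⊤) :
    (sSup {e : EReal | ∃ Q : Measure (Fin n → ℝ), IsProbabilityMeasure Q ∧
        e = intEE f Q - Hent Q}
      = ((Real.log (∫⁻ x, expE (f x) ∂(volume : Measure (Fin n → ℝ))).toReal : ℝ) : EReal))
    ∧
    (Hent ((volume : Measure (Fin n → ℝ)).withDensity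
        (fun x => expE (f x) / ∫⁻ y, expE (f y) ∂(volume : Measure (Fin n → ℝ)))) ≠ ⊤
      ↔
      ((intEE f ((volume : Measure (Fin n → ℝ)).withDensity
            (fun x => expE (f x) / ∫⁻ y, expE (f y) ∂(volume : Measure (Fin n → ℝ))))
          - Hent ((volume : Measure (Fin n → ℝ)).withDensity
            (fun x => expE (f x) / ∫⁻ y, expE (f y) ∂(volume : Measure (Fin n → ℝ))))
        = ((Real.log
            (∫⁻ x, expE (f x) ∂(volume : Measure (Fin n → ℝ))).toReal : ℝ) : EReal)) ∧
        ∀ Q : Measure (Fin n → ℝ), IsProbabilityMeasure Q →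
          intEE f Q - Hent Q
            = ((Real.log
                (∫⁻ x, expE (f x) ∂(volume : Measure (Fin n → ℝ))).toReal : ℝ) : EReal) →
          Q = (volume : Measure (Fin n → ℝ)).withDensity
            (fun x => expE (f x) / ∫⁻ y, expE (f y) ∂(volume : Measure (Fin n → ℝ)))))
    ∧
    (((intEE f ((volume : Measure (Fin n → ℝ)).withDensity
            (fun x => expE (f x) / ∫⁻ y, expE (f y) ∂(volume : Measure (Fin n → ℝ))))
          - Hent ((volume : Measure (Fin n → ℝ)).withDensity
            (fun x => expE (f x) / ∫⁻ y, expE (f y) ∂(volume : Measure (Fin n → ℝ))))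
        = ((Real.log
            (∫⁻ x, expE (f x) ∂(volume : Measure (Fin n → ℝ))).toReal : ℝ) : EReal)) ∧
        ∀ Q : Measure (Fin n → ℝ), IsProbabilityMeasure Q →
          intEE f Q - Hent Q
            = ((Real.log
                (∫⁻ x, expE (f x) ∂(volume : Measure (Fin n → ℝ))).toReal : ℝ) : EReal) →
          Q = (volume : Measure (Fin n → ℝ)).withDensity
            (fun x => expE (f x) / ∫⁻ y, expE (f y) ∂(volume : Measure (Fin n → ℝ))))
      ↔
      ∃ Q : Measure (Fin n → ℝ), IsProbabilityMeasure Q ∧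
        intEE f Q - Hent Q
          = ((Real.log
              (∫⁻ x, expE (f x) ∂(volume : Measure (Fin n → ℝ))).toReal : ℝ) : EReal)) := by
  have hZ0' : GibbsAux.Zc f ≠ 0 := hZ0
  have hZtop' : GibbsAux.Zc f ≠ ⊤ := hZtop
  refine ⟨?_, ?_, ?_⟩
  · apply le_antisymm
    · refine sSup_le ?_
      rintro e ⟨Q, hQ, rfl⟩
      haveI := hQ
      exact GibbsAux.value_le hf hbd hZ0' hZtop' Q
    · exact GibbsAux.sup_ge hf hbd hZ0' hZtop'
  · constructor
    · intro hP
      have hP' : Hent ((volume : Measure (Fin n → ℝ)).withDensity (GibbsAux.pd f)) ≠ ⊤ := hP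
      refine ⟨GibbsAux.value_at_P hf hbd hZ0' hZtop' hP', ?_⟩
      intro Q hQ hval
      haveI := hQ
      exact GibbsAux.value_eq_imp hf hbd hZ0' hZtop' Q hval
    · rintro ⟨heq, -⟩
      intro htop
      rw [htop, EReal.sub_top] at heq
      exact (EReal.bot_lt_coe _).ne heq
  · constructor
    · rintro ⟨heq, -⟩
      exact ⟨_, GibbsAux.isProbability_P hf hZ0' hZtop', heq⟩
    · rintro ⟨Q, hQ, heq⟩
      haveI := hQ
      have hQP := GibbsAux.value_eq_imp hf hbd hZ0' hZtop' Q heq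
      have h2 := heq
      rw [hQP] at h2
      refine ⟨h2, ?_⟩
      intro Q' hQ' hval'
      haveI := hQ'
      exact GibbsAux.value_eq_imp hf hbd hZ0' hZtop' Q' hval'

end
end

section
/- Let f : ℝⁿ → ℝ be C² and κ-concave for some κ > 0, with |f(x)| ≤ c₁·exp(c₂|x|²) for some c₁ ≥ 0 and 0 ≤ c₂ < κ/2, and let P(dx) = Z⁻¹e^{f(x)}dx. Then −∞ < sup over product probability measures Q on ℝⁿ of (∫ f dQ − H(Q)) < ∞; any product measure Q* attaining this supremum satisfies f ∈ L¹(Q*); and log ∫_{ℝⁿ} e^{f(x)}dx − sup over product measures Q of (∫ f dQ − H(Q)) = inf over product measures Q of H(Q | P). -/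
open MeasureTheory Real Filter Topology
open scoped ENNReal NNReal BigOperators Classical

noncomputable section

/-- The integral `∫ f dQ` of a real function, with values in the extended reals. -/
def intE {α : Type*} [MeasurableSpace α] (f : α → ℝ) (Q : Measure α) : EReal :=
  ((∫⁻ x, ENNReal.ofReal (f x) ∂Q : ℝ≥0∞) : EReal)
    - ((∫⁻ x, ENNReal.ofReal (-f x) ∂Q : ℝ≥0∞) : EReal)

/-- The relative entropy `H(Q | P)`, `= ∞` if `Q` is not absolutely continuous
w.r.t. `P`. -/
def relEnt {α : Type*} [MeasurableSpace α] (Q P : Measure α) : ℝ≥0∞ :=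
  if Q ≪ P ∧ Integrable
      (fun x => (Q.rnDeriv P x).toReal * Real.log (Q.rnDeriv P x).toReal) P then
    ENNReal.ofReal (∫ x, (Q.rnDeriv P x).toReal * Real.log (Q.rnDeriv P x).toReal ∂P)
  else ⊤

/-- The mean field objective `Q ↦ ∫ f dQ − H(Q)`. -/
def MFObj {α : Type*} [MeasureSpace α] (f : α → ℝ) (Q : Measure α) : EReal :=
  intE f Q - Hent Q

/-- A product probability measure on `ℝⁿ`. -/
def IsProductProb (n : ℕ) (Q : Measure (Fin n → ℝ)) : Prop :=
  ∃ Qi : Fin n → Measure ℝ, (∀ i, IsProbabilityMeasure (Qi i)) ∧ Q = Measure.pi Qi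

/-- The supremum of the mean field objective over product probability measures. -/
def MFSup (n : ℕ) (f : (Fin n → ℝ) → ℝ) : EReal :=
  sSup {e : EReal | ∃ Q : Measure (Fin n → ℝ), IsProductProb n Q ∧ e = MFObj f Q}

/-- The partition function `∫ e^f dx`. -/
def Zpart (n : ℕ) (f : (Fin n → ℝ) → ℝ) : ℝ≥0∞ :=
  ∫⁻ x, ENNReal.ofReal (Real.exp (f x)) ∂(volume : Measure (Fin n → ℝ))

/-- The Gibbs probability measure `P(dx) = Z⁻¹ e^{f(x)} dx`. -/
def gibbs (n : ℕ) (f : (Fin n → ℝ) → ℝ) : Measure (Fin n → ℝ) :=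
  (volume : Measure (Fin n → ℝ)).withDensity
    (fun x => ENNReal.ofReal (Real.exp (f x)) / Zpart n f)

namespace Stmt18Aux

set_option linter.unusedSectionVars false
set_option linter.unnecessarySimpa false

lemma young {t w : ℝ} (ht : 0 ≤ t) : t * w ≤ max (t * Real.log t) 0 + Real.exp w := by
  rcases eq_or_lt_of_le ht with h | h
  · simp only [← h, zero_mul, max_self, zero_add]
    positivity
  · have h1 : Real.log (Real.exp w / t) ≤ Real.exp w / t - 1 :=
      Real.log_le_sub_one_of_pos (by positivity)
    rw [Real.log_div (Real.exp_ne_zero w) h.ne', Real.log_exp] at h1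
    have h2 : t * w - t * Real.log t ≤ Real.exp w - t := by
      have := mul_le_mul_of_nonneg_left h1 ht
      rw [mul_sub, mul_sub, mul_div_cancel₀ _ h.ne'] at this
      linarith
    have h3 : t * Real.log t ≤ max (t * Real.log t) 0 := le_max_left _ _
    linarith [h.le]
  
lemma sub_one_le_mul_log {t : ℝ} (ht : 0 ≤ t) : t - 1 ≤ t * Real.log t := by
  rcases eq_or_lt_of_le ht with h | h
  · simp [← h]
  · have h1 : Real.log t⁻¹ ≤ t⁻¹ - 1 := Real.log_le_sub_one_of_pos (by positivity)
    rw [Real.log_inv] at h1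
    have := mul_le_mul_of_nonneg_left h1 ht
    rw [mul_sub, mul_inv_cancel₀ h.ne'] at this
    nlinarith

lemma coeE {x : ℝ≥0∞} (h : x ≠ ⊤) : ((x.toReal : ℝ) : EReal) = (x : EReal) := by
  conv_rhs => rw [← ENNReal.ofReal_toReal h]
  rw [EReal.coe_ennreal_ofReal, max_eq_left ENNReal.toReal_nonneg]

lemma enorm_real (r : ℝ) : (‖r‖₊ : ℝ≥0∞) = ENNReal.ofReal r + ENNReal.ofReal (-r) := by
  rw [← enorm_eq_nnnorm, Real.enorm_eq_ofReal_abs]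
  rcases le_total 0 r with h | h
  · rw [abs_of_nonneg h, ENNReal.ofReal_of_nonpos (neg_nonpos.mpr h), add_zero]
  · rw [abs_of_nonpos h, ENNReal.ofReal_of_nonpos h, zero_add]


lemma ofReal_max_zero (r : ℝ) : ENNReal.ofReal (max r 0) = ENNReal.ofReal r := by
  rcases le_total r 0 with h | h
  · rw [max_eq_right h, ENNReal.ofReal_of_nonpos h, ENNReal.ofReal_zero]
  · rw [max_eq_left h]


section IntE
variable {α : Type*} [MeasurableSpace α] {f : α → ℝ} {Q : Measure α}

lemma lint_pos_ne_top (hf : Integrable f Q) : ∫⁻ x, ENNReal.ofReal (f x) ∂Q ≠ ⊤ := by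
  refine ne_of_lt (lt_of_le_of_lt (lintegral_mono fun x => ?_) hf.hasFiniteIntegral)
  rw [enorm_eq_nnnorm, enorm_real]; exact le_self_add

lemma lint_neg_ne_top (hf : Integrable f Q) : ∫⁻ x, ENNReal.ofReal (-f x) ∂Q ≠ ⊤ := by
  refine ne_of_lt (lt_of_le_of_lt (lintegral_mono fun x => ?_) hf.hasFiniteIntegral)
  rw [enorm_eq_nnnorm, enorm_real]; exact le_add_self

lemma intE_eq (hf : Integrable f Q) : intE f Q = ((∫ x, f x ∂Q : ℝ) : EReal) := by
  rw [intE, ← coeE (lint_pos_ne_top hf), ← coeE (lint_neg_ne_top hf), ← EReal.coe_sub,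
    integral_eq_lintegral_pos_part_sub_lintegral_neg_part hf]

lemma integrable_of_ne_top (hm : AEStronglyMeasurable f Q)
    (h1 : ∫⁻ x, ENNReal.ofReal (f x) ∂Q ≠ ⊤)
    (h2 : ∫⁻ x, ENNReal.ofReal (-f x) ∂Q ≠ ⊤) : Integrable f Q := by
  refine ⟨hm, ?_⟩
  rw [HasFiniteIntegral]
  calc ∫⁻ x, (‖f x‖₊ : ℝ≥0∞) ∂Q
      = ∫⁻ x, (ENNReal.ofReal (f x) + ENNReal.ofReal (-f x)) ∂Q :=
        lintegral_congr fun x => enorm_real (f x)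
    _ = (∫⁻ x, ENNReal.ofReal (f x) ∂Q) + ∫⁻ x, ENNReal.ofReal (-f x) ∂Q :=
        lintegral_add_left' (ENNReal.measurable_ofReal.comp_aemeasurable
          hm.aemeasurable) _
    _ < ⊤ := ENNReal.add_lt_top.mpr ⟨h1.lt_top, h2.lt_top⟩

lemma intE_bot (h2 : ∫⁻ x, ENNReal.ofReal (-f x) ∂Q = ⊤) : intE f Q = ⊥ := by
  rw [intE, h2, EReal.coe_ennreal_top, EReal.sub_top]

end IntE


/-- The function `x ↦ u(x) log u(x)` where `u` is the density of `Q`. -/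
def tfun {α : Type*} [MeasureSpace α] (Q : Measure α) : α → ℝ :=
  fun x => (Q.rnDeriv volume x).toReal * Real.log (Q.rnDeriv volume x).toReal

variable {α : Type*} [MeasureSpace α] [SigmaFinite (volume : Measure α)]
  {Q : Measure α} [SigmaFinite Q]

lemma tfun_measurable : Measurable (tfun Q) :=
  ((Measure.measurable_rnDeriv Q volume).ennreal_toReal).mul
    (Real.measurable_log.comp (Measure.measurable_rnDeriv Q volume).ennreal_toReal)

lemma integrable_min_tfun (ht : Integrable (tfun Q) (volume : Measure α)) :
    Integrable (fun x => min (tfun Q x) 0) (volume : Measure α) := by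
  refine ht.mono ((tfun_measurable.min measurable_const).aestronglyMeasurable) ?_
  filter_upwards with x
  rcases le_total (tfun Q x) 0 with h | h
  · rw [min_eq_left h]
  · rw [min_eq_right h]; simpa using h

lemma hent_of_integrable (hQv : Q ≪ (volume : Measure α))
    (ht : Integrable (tfun Q) (volume : Measure α)) :
    Hent Q = ((∫ x, tfun Q x ∂(volume : Measure α) : ℝ) : EReal) := by
  have hmax : Integrable (fun x => max (tfun Q x) 0) (volume : Measure α) := by
    refine ht.mono ((tfun_measurable.max measurable_const).aestronglyMeasurable) ?_
    filter_upwards with x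
    rcases le_total (tfun Q x) 0 with h | h
    · rw [max_eq_right h]; simpa using h
    · rw [max_eq_left h]
  have hmin := integrable_min_tfun ht
  have hA : ∫⁻ x, ENNReal.ofReal (tfun Q x) ∂(volume : Measure α)
      = ENNReal.ofReal (∫ x, max (tfun Q x) 0 ∂(volume : Measure α)) := by
    rw [ofReal_integral_eq_lintegral_ofReal hmax (Filter.Eventually.of_forall fun x => le_max_right _ _)]
    exact (lintegral_congr fun x => (ofReal_max_zero (tfun Q x)).symm)
  rw [Hent, if_pos (⟨hQv, hmin⟩ :
    Q ≪ (volume : Measure α) ∧ Integrable (fun x =>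
      min ((Q.rnDeriv volume x).toReal * Real.log (Q.rnDeriv volume x).toReal) 0)
      (volume : Measure α))]
  show ((∫⁻ x, ENNReal.ofReal (tfun Q x) ∂(volume : Measure α) : ℝ≥0∞) : EReal)
      + ((∫ x, min (tfun Q x) 0 ∂(volume : Measure α) : ℝ) : EReal) = _
  rw [hA, EReal.coe_ennreal_ofReal,
    max_eq_left (integral_nonneg (fun x => le_max_right (tfun Q x) 0)), ← EReal.coe_add,
    ← integral_add hmax hmin]
  norm_num [max_add_min]

lemma hent_top_of_not_integrable (ht : ¬ Integrable (tfun Q) (volume : Measure α)) :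
    Hent Q = ⊤ := by
  rw [Hent]
  split_ifs with h
  · obtain ⟨-, hmin⟩ := h
    have hA : ∫⁻ x, ENNReal.ofReal (tfun Q x) ∂(volume : Measure α) = ⊤ := by
      by_contra hA
      refine ht ⟨tfun_measurable.aestronglyMeasurable, ?_⟩
      rw [HasFiniteIntegral]
      have hcalc : ∫⁻ x, (‖tfun Q x‖₊ : ℝ≥0∞) ∂(volume : Measure α)
          = (∫⁻ x, ENNReal.ofReal (tfun Q x) ∂(volume : Measure α))
            + ∫⁻ x, ENNReal.ofReal (-(tfun Q x)) ∂(volume : Measure α) := by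
        rw [← lintegral_add_left' (tfun_measurable.ennreal_ofReal).aemeasurable _]
        exact lintegral_congr fun x => enorm_real (tfun Q x)
      refine lt_of_eq_of_lt hcalc ?_
      have hB : ∫⁻ x, ENNReal.ofReal (-(tfun Q x)) ∂(volume : Measure α) < ⊤ := by
        refine lt_of_le_of_lt (lintegral_mono fun x => ?_) hmin.hasFiniteIntegral
        show ENNReal.ofReal (-tfun Q x) ≤ (‖min (tfun Q x) 0‖₊ : ℝ≥0∞)
        rw [enorm_real]
        rcases le_total (tfun Q x) 0 with h | h
        · rw [min_eq_left h]
          exact le_add_self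
        · rw [min_eq_right h]
          rw [ENNReal.ofReal_of_nonpos (neg_nonpos.mpr h)]
          exact zero_le
      exact ENNReal.add_lt_top.mpr ⟨lt_of_le_of_ne le_top hA, hB⟩
    show ((∫⁻ x, ENNReal.ofReal (tfun Q x) ∂(volume : Measure α) : ℝ≥0∞) : EReal)
      + ((∫ x, min (tfun Q x) 0 ∂(volume : Measure α) : ℝ) : EReal) = ⊤
    rw [hA, EReal.coe_ennreal_top, EReal.top_add_coe]
  · rfl

lemma hent_ne_bot : Hent Q ≠ ⊥ := by
  rw [Hent]
  split_ifs with h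
  · rcases eq_or_ne (∫⁻ x, ENNReal.ofReal
        ((Q.rnDeriv volume x).toReal * Real.log (Q.rnDeriv volume x).toReal)
        ∂(volume : Measure α)) ⊤ with hA | hA
    · rw [hA, EReal.coe_ennreal_top, EReal.top_add_coe]
      exact ne_of_gt bot_lt_top
    · rw [← coeE hA, ← EReal.coe_add]; exact EReal.coe_ne_bot _
  · exact ne_of_gt bot_lt_top


section Transfer
variable {β : Type*} [MeasurableSpace β] {Q P : Measure β} [SigmaFinite Q] [SigmaFinite P]

lemma integrable_mul_log_iff (hQP : Q ≪ P) :
    Integrable (fun x => (Q.rnDeriv P x).toReal * Real.log (Q.rnDeriv P x).toReal) P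
      ↔ Integrable (llr Q P) Q := by
  have h : (fun x => (Q.rnDeriv P x).toReal * Real.log (Q.rnDeriv P x).toReal)
      = fun x => (Q.rnDeriv P x).toReal • llr Q P x := rfl
  rw [h]
  exact integrable_rnDeriv_smul_iff hQP

lemma integral_mul_log (hQP : Q ≪ P) :
    ∫ x, (Q.rnDeriv P x).toReal * Real.log (Q.rnDeriv P x).toReal ∂P
      = ∫ x, llr Q P x ∂Q :=
  integral_rnDeriv_smul hQP

lemma integral_llr_nonneg' [IsProbabilityMeasure Q] [IsProbabilityMeasure P] (hQP : Q ≪ P)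
    (h : Integrable (llr Q P) Q) : 0 ≤ ∫ x, llr Q P x ∂Q := by
  rw [← integral_mul_log hQP]
  have h1 : Integrable (fun x => (Q.rnDeriv P x).toReal - 1) P :=
    Measure.integrable_toReal_rnDeriv.sub (integrable_const 1)
  have h2 := (integrable_mul_log_iff hQP).mpr h
  have h3 := integral_mono h1 h2 (fun x => sub_one_le_mul_log ENNReal.toReal_nonneg)
  rw [integral_sub Measure.integrable_toReal_rnDeriv (integrable_const 1),
    Measure.integral_toReal_rnDeriv hQP] at h3
  simp [measure_univ] at h3
  linarith
end Transfer


lemma final_step {gx K r s κ e : ℝ} (hκ : 0 < κ) (he : 0 ≤ e) (hr2 : r ^ 2 = s)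
    (hgxK : gx ≤ K * r) (hkey : K * r - κ / 2 * r ^ 2 ≤ K ^ 2 / κ - κ / 4 * r ^ 2) :
    gx - κ / 2 * s ≤ K ^ 2 / κ + (e + κ / 4) - κ / 4 * s := by
  rw [← hr2]
  linarith

lemma exists_upper {n : ℕ} {f : (Fin n → ℝ) → ℝ} {κ c₁ c₂ : ℝ} (hκ : 0 < κ)
    (hconc : ConcaveOn ℝ Set.univ fun x => f x + κ / 2 * ∑ i, x i ^ 2)
    (hc₁ : 0 ≤ c₁) (hc₂ : 0 ≤ c₂)
    (hgrowth : ∀ x, |f x| ≤ c₁ * Real.exp (c₂ * ∑ i, x i ^ 2)) :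
    ∃ C : ℝ, ∀ x, f x ≤ C - κ / 4 * ∑ i, x i ^ 2 := by
  set g : (Fin n → ℝ) → ℝ := fun x => f x + κ / 2 * ∑ i, x i ^ 2 with hg
  set K : ℝ := c₁ * Real.exp c₂ + κ / 2 + |g 0| with hK
  have hK0 : 0 ≤ K := by positivity
  refine ⟨K ^ 2 / κ + (c₁ * Real.exp c₂ + κ / 4), fun x => ?_⟩
  set s : ℝ := ∑ i, x i ^ 2 with hs
  have hs0 : 0 ≤ s := Finset.sum_nonneg fun i _ => sq_nonneg _
  have hKκ : 0 ≤ K ^ 2 / κ := by positivity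
  by_cases hs1 : s ≤ 1
  · have h1 : f x ≤ c₁ * Real.exp (c₂ * s) := le_trans (le_abs_self _) (hgrowth x)
    have h2 : c₁ * Real.exp (c₂ * s) ≤ c₁ * Real.exp c₂ := by
      apply mul_le_mul_of_nonneg_left _ hc₁
      exact Real.exp_le_exp.mpr (by nlinarith)
    nlinarith
  · push_neg at hs1
    set r : ℝ := Real.sqrt s with hr
    have hr2 : r ^ 2 = s := Real.sq_sqrt hs0
    have hr1 : 1 ≤ r := by
      rw [show (1:ℝ) = Real.sqrt 1 by simp]
      exact Real.sqrt_le_sqrt hs1.le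
    have hrpos : 0 < r := by linarith
    set t : ℝ := r⁻¹ with ht
    have ht0 : 0 < t := by positivity
    have ht1 : t ≤ 1 := by
      rw [ht]
      exact inv_le_one_of_one_le₀ hr1
    have hcomb := hconc.2 (Set.mem_univ x) (Set.mem_univ (0 : Fin n → ℝ))
      ht0.le (by linarith : (0:ℝ) ≤ 1 - t) (by ring)
    rw [smul_zero, add_zero, smul_eq_mul, smul_eq_mul] at hcomb
    have hsum : ∑ i, (t • x) i ^ 2 = t ^ 2 * s := by
      rw [hs, Finset.mul_sum]
      exact Finset.sum_congr rfl fun i _ => by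
        simp [Pi.smul_apply, smul_eq_mul, mul_pow]
    have hts : t ^ 2 * s = 1 := by
      rw [ht, ← hr2]
      field_simp
    have hfb : f (t • x) ≤ c₁ * Real.exp c₂ := by
      refine le_trans (le_abs_self _) (le_trans (hgrowth (t • x)) ?_)
      rw [hsum, hts, mul_one]
    have hgb : g (t • x) ≤ c₁ * Real.exp c₂ + κ / 2 := by
      have : g (t • x) = f (t • x) + κ / 2 * ∑ i, (t • x) i ^ 2 := rfl
      rw [this, hsum, hts, mul_one]
      linarith
    have hg0 : -((1 - t) * g 0) ≤ |g 0| := by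
      nlinarith [le_abs_self (g 0), neg_abs_le (g 0), abs_nonneg (g 0)]
    have htg : t * g x ≤ K := by
      have h1 : t * g x ≤ g (t • x) + -((1 - t) * g 0) := by linarith [hcomb]
      have h2 : t * g x ≤ c₁ * Real.exp c₂ + κ / 2 + |g 0| := by
        refine le_trans h1 (le_trans (add_le_add hgb hg0) (le_of_eq ?_))
        ring
      rw [hK]
      exact h2
    have hgxK : g x ≤ K * r := by
      have h := mul_le_mul_of_nonneg_left htg hrpos.le
      rw [ht, ← mul_assoc, mul_inv_cancel₀ hrpos.ne', one_mul] at h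
      linarith [h]
    have hgx : f x = g x - κ / 2 * s := by
      rw [hg]; ring
    rw [hgx]
    have hkey : K * r - κ / 2 * r ^ 2 ≤ K ^ 2 / κ - κ / 4 * r ^ 2 := by
      have hD : K ^ 2 / κ * κ = K ^ 2 := div_mul_cancel₀ _ hκ.ne'
      nlinarith [sq_nonneg (K - κ * r / 2), hκ, mul_pos hκ hκ]
    have hpos : 0 ≤ c₁ * Real.exp c₂ := mul_nonneg hc₁ (Real.exp_pos c₂).le
    exact final_step hκ hpos hr2 hgxK hkey

/-! ### Integrability of Gaussian-type dominators -/

lemma integrable_exp_quad (n : ℕ) (b cc : ℝ) (hcc : 0 < cc) :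
    Integrable (fun x : Fin n → ℝ => Real.exp (b - cc * ∑ i, x i ^ 2))
      (volume : Measure (Fin n → ℝ)) := by
  have h : (fun x : Fin n → ℝ => Real.exp (b - cc * ∑ i, x i ^ 2))
      = fun x => Real.exp b * ∏ i, Real.exp (-cc * (x i) ^ 2) := by
    funext x
    rw [sub_eq_add_neg, Real.exp_add]
    congr 1
    rw [← Real.exp_sum]
    congr 1
    rw [Finset.mul_sum, ← Finset.sum_neg_distrib]
    exact Finset.sum_congr rfl fun i _ => by ring
  rw [h]
  exact (Integrable.fintype_prod (𝕜 := ℝ)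
    (f := fun (_ : Fin n) (y : ℝ) => Real.exp (-cc * y ^ 2))
    (fun _ => integrable_exp_neg_mul_sq hcc)).const_mul _


lemma ereal_sub_ennreal_le (c : ℝ) (r : ℝ≥0∞) : (c : EReal) - (r : EReal) ≤ (c : EReal) := by
  rcases eq_or_ne r ⊤ with h | h
  · rw [h, EReal.coe_ennreal_top, EReal.sub_top]
    exact bot_le
  · rw [← coeE h, ← EReal.coe_sub]
    exact EReal.coe_le_coe_iff.mpr (by linarith [ENNReal.toReal_nonneg (a := r)])

lemma ereal_sub_le_sub (c : ℝ) {a b : EReal} (h : a ≤ b) :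
    (c : EReal) - b ≤ (c : EReal) - a := by
  simp only [sub_eq_add_neg]
  exact add_le_add_right (EReal.neg_le_neg_iff.mpr h) _

lemma ereal_sub_sub_cancel (c : ℝ) {r : ℝ≥0∞} (h : r ≠ ⊤) :
    (c : EReal) - ((c : EReal) - (r : EReal)) = (r : EReal) := by
  rw [← coeE h, ← EReal.coe_sub, ← EReal.coe_sub]
  norm_cast
  ring

lemma ereal_sub_sub_le (c : ℝ) (r : ℝ≥0∞) :
    (c : EReal) - ((c : EReal) - (r : EReal)) ≤ (r : EReal) := by
  rcases eq_or_ne r ⊤ with h | h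
  · rw [h, EReal.coe_ennreal_top]
    exact le_top
  · exact le_of_eq (ereal_sub_sub_cancel c h)


/-! ### The product uniform measure on the unit box -/

def box (n : ℕ) : Set (Fin n → ℝ) := Set.univ.pi fun _ => Set.Icc (0:ℝ) 1

lemma box_meas (n : ℕ) : MeasurableSet (box n) :=
  MeasurableSet.univ_pi fun _ => measurableSet_Icc

lemma prob_restrict : IsProbabilityMeasure ((volume : Measure ℝ).restrict (Set.Icc 0 1)) := by
  constructor
  rw [Measure.restrict_apply_univ, Real.volume_Icc]
  norm_num

lemma pi_eq_box (n : ℕ) :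
    Measure.pi (fun _ : Fin n => (volume : Measure ℝ).restrict (Set.Icc 0 1))
      = (volume : Measure (Fin n → ℝ)).restrict (box n) := by
  haveI : ∀ i : Fin n, IsProbabilityMeasure ((volume : Measure ℝ).restrict (Set.Icc 0 1)) :=
    fun _ => prob_restrict
  refine Measure.pi_eq fun s hs => ?_
  rw [Measure.restrict_apply (MeasurableSet.univ_pi hs), box, ← Set.pi_inter_distrib,
    volume_pi, Measure.pi_pi]
  exact Finset.prod_congr rfl fun i _ => (Measure.restrict_apply (hs i)).symm

lemma box_prob (n : ℕ) :
    IsProbabilityMeasure ((volume : Measure (Fin n → ℝ)).restrict (box n)) := by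
  constructor
  rw [Measure.restrict_apply_univ, box, volume_pi, Measure.pi_pi]
  simp [Real.volume_Icc]

lemma box_ac (n : ℕ) : (volume : Measure (Fin n → ℝ)).restrict (box n)
    ≪ (volume : Measure (Fin n → ℝ)) :=
  Measure.absolutelyContinuous_of_le Measure.restrict_le_self

lemma box_tfun_zero (n : ℕ) :
    tfun ((volume : Measure (Fin n → ℝ)).restrict (box n)) =ᵐ[(volume : Measure (Fin n → ℝ))]
      (0 : (Fin n → ℝ) → ℝ) := by
  have h1 : (volume : Measure (Fin n → ℝ)).restrict (box n)
      = (volume : Measure (Fin n → ℝ)).withDensity ((box n).indicator 1) :=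
    (withDensity_indicator_one (box_meas n)).symm
  have h2 : ((volume : Measure (Fin n → ℝ)).restrict (box n)).rnDeriv
        (volume : Measure (Fin n → ℝ))
      =ᵐ[(volume : Measure (Fin n → ℝ))] (box n).indicator 1 := by
    rw [h1]
    exact Measure.rnDeriv_withDensity _ (measurable_one.indicator (box_meas n))
  filter_upwards [h2] with x hx
  rw [tfun, hx]
  by_cases hmem : x ∈ box n
  · simp [Set.indicator_of_mem hmem]
  · simp [Set.indicator_of_notMem hmem]

lemma box_tfun_integrable (n : ℕ) :
    Integrable (tfun ((volume : Measure (Fin n → ℝ)).restrict (box n)))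
      (volume : Measure (Fin n → ℝ)) :=
  (integrable_zero _ _ _).congr (box_tfun_zero n).symm

lemma box_f_integrable {n : ℕ} {f : (Fin n → ℝ) → ℝ} (hf : Continuous f) :
    Integrable f ((volume : Measure (Fin n → ℝ)).restrict (box n)) := by
  have hcompact : IsCompact (box n) := isCompact_univ_pi fun _ => isCompact_Icc
  exact hf.continuousOn.integrableOn_compact hcompact


section SpaceFacts
variable {n : ℕ} {f : (Fin n → ℝ) → ℝ}

lemma neZero_vol : NeZero (volume : Measure (Fin n → ℝ)) := by
  constructor
  intro h
  have h1 : (volume : Measure (Fin n → ℝ)) (Set.univ.pi fun _ => Set.Icc (0:ℝ) 1) = 1 := by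
    rw [volume_pi, Measure.pi_pi]
    simp [Real.volume_Icc]
  rw [h] at h1
  simp at h1

lemma Zpart_eq (hfe : Integrable (fun x => Real.exp (f x)) (volume : Measure (Fin n → ℝ))) :
    Zpart n f = ENNReal.ofReal (∫ x, Real.exp (f x) ∂(volume : Measure (Fin n → ℝ))) :=
  (ofReal_integral_eq_lintegral_ofReal hfe
    (Filter.Eventually.of_forall fun x => (Real.exp_pos _).le)).symm

lemma gibbs_eq_tilted
    (hfe : Integrable (fun x => Real.exp (f x)) (volume : Measure (Fin n → ℝ))) :
    gibbs n f = (volume : Measure (Fin n → ℝ)).tilted f := by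
  haveI := neZero_vol (n := n)
  rw [gibbs, Measure.tilted, Zpart_eq hfe]
  congr 1
  funext x
  rw [ENNReal.ofReal_div_of_pos (integral_exp_pos hfe)]

variable {Q : Measure (Fin n → ℝ)} [IsProbabilityMeasure Q]

/-- If `f` is `Q`-integrable and the entropy integrand is integrable, then the
log-likelihood ratio against the Gibbs measure is `Q`-integrable. -/
lemma llr_gibbs_integrable
    (hfe : Integrable (fun x => Real.exp (f x)) (volume : Measure (Fin n → ℝ)))
    (hQv : Q ≪ (volume : Measure (Fin n → ℝ)))
    (hfQ : Integrable f Q) (ht : Integrable (tfun Q) (volume : Measure (Fin n → ℝ))) :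
    Integrable (llr Q (gibbs n f)) Q := by
  haveI := neZero_vol (n := n)
  rw [gibbs_eq_tilted hfe]
  have hQP : Q ≪ (volume : Measure (Fin n → ℝ)).tilted f :=
    hQv.trans (absolutelyContinuous_tilted hfe)
  refine (integrable_congr (llr_tilted_right hQv hfe)).mpr ?_
  exact (hfQ.neg.add (integrable_const _)).add ((integrable_mul_log_iff hQv).mp ht)

/-- Young-type bound: `∫ |f| dQ` is finite whenever `llr Q P` is `Q`-integrable. -/
lemma integrable_f_of_llr (hf : Continuous f)
    (hfe : Integrable (fun x => Real.exp (f x)) (volume : Measure (Fin n → ℝ)))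
    (hfe2 : ∫⁻ x, ENNReal.ofReal (Real.exp (|f x| / 2 + f x))
      ∂(volume : Measure (Fin n → ℝ)) ≠ ⊤)
    (hQv : Q ≪ (volume : Measure (Fin n → ℝ)))
    (hI : Integrable (llr Q (gibbs n f)) Q) : Integrable f Q := by
  haveI := neZero_vol (n := n)
  set μ := (volume : Measure (Fin n → ℝ))
  set P := gibbs n f with hPdef
  have hPt : P = μ.tilted f := gibbs_eq_tilted hfe
  haveI : IsProbabilityMeasure P := by rw [hPt]; exact isProbabilityMeasure_tilted hfe
  have hQP : Q ≪ P := by rw [hPt]; exact hQv.trans (absolutelyContinuous_tilted hfe)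
  haveI : Q.HaveLebesgueDecomposition P := Measure.haveLebesgueDecomposition_of_sigmaFinite Q P
  set v := Q.rnDeriv P with hv
  -- the (nonnegative) integrand |f| transferred to P
  have h0 : ∫⁻ x, ENNReal.ofReal |f x| ∂Q = ∫⁻ x, v x * ENNReal.ofReal |f x| ∂P :=
    (lintegral_rnDeriv_mul hQP (hf.measurable.abs.ennreal_ofReal).aemeasurable).symm
  -- pointwise Young bound
  have hYoung : ∀ᵐ x ∂P, v x * ENNReal.ofReal |f x|
      ≤ 2 * ((‖(v x).toReal * llr Q P x‖₊ : ℝ≥0∞) + ENNReal.ofReal (Real.exp (|f x| / 2))) := by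
    filter_upwards [Q.rnDeriv_lt_top P] with x hvx
    have e1 : v x * ENNReal.ofReal |f x| = ENNReal.ofReal ((v x).toReal * |f x|) := by
      rw [ENNReal.ofReal_mul ENNReal.toReal_nonneg, ENNReal.ofReal_toReal hvx.ne]
    rw [e1]
    have e2 : (v x).toReal * |f x| = 2 * ((v x).toReal * (|f x| / 2)) := by ring
    have e3 : (v x).toReal * (|f x| / 2)
        ≤ max ((v x).toReal * Real.log (v x).toReal) 0 + Real.exp (|f x| / 2) :=
      young ENNReal.toReal_nonneg
    calc ENNReal.ofReal ((v x).toReal * |f x|)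
        ≤ ENNReal.ofReal (2 * (max ((v x).toReal * Real.log (v x).toReal) 0
            + Real.exp (|f x| / 2))) := by
          rw [e2]
          exact ENNReal.ofReal_le_ofReal (by linarith)
      _ = 2 * (ENNReal.ofReal (max ((v x).toReal * Real.log (v x).toReal) 0)
            + ENNReal.ofReal (Real.exp (|f x| / 2))) := by
          rw [ENNReal.ofReal_mul (by norm_num), ENNReal.ofReal_add (le_max_right _ _)
            (Real.exp_pos _).le, ENNReal.ofReal_ofNat]
      _ ≤ 2 * ((‖(v x).toReal * llr Q P x‖₊ : ℝ≥0∞) + ENNReal.ofReal (Real.exp (|f x| / 2))) := by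
          gcongr
          rw [ofReal_max_zero, ← enorm_eq_nnnorm, Real.enorm_eq_ofReal_abs]
          exact ENNReal.ofReal_le_ofReal (le_abs_self _)
  -- the first term is finite by hypothesis
  have h1 : ∫⁻ x, (‖(v x).toReal * llr Q P x‖₊ : ℝ≥0∞) ∂P < ⊤ := by
    have := ((integrable_rnDeriv_smul_iff hQP).mpr hI).hasFiniteIntegral
    exact this
  -- the second term is finite by the growth assumption
  have h2 : ∫⁻ x, ENNReal.ofReal (Real.exp (|f x| / 2)) ∂P < ⊤ := by
    rw [hPdef, gibbs, lintegral_withDensity_eq_lintegral_mul₀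
      (((hf.measurable.exp).ennreal_ofReal.div_const _).aemeasurable)
      (((hf.measurable.abs.div_const _).exp).ennreal_ofReal.aemeasurable)]
    have hb : ∀ x, ((fun x => ENNReal.ofReal (Real.exp (f x)) / Zpart n f) *
        fun x => ENNReal.ofReal (Real.exp (|f x| / 2))) x
        = ENNReal.ofReal (Real.exp (|f x| / 2 + f x)) / Zpart n f := by
      intro x
      simp only [Pi.mul_apply]
      rw [ENNReal.div_eq_inv_mul, ENNReal.div_eq_inv_mul, mul_assoc,
        ← ENNReal.ofReal_mul (Real.exp_pos _).le, ← Real.exp_add,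
        add_comm (f x) (|f x| / 2)]
    rw [lintegral_congr hb]
    have hZ0 : Zpart n f ≠ 0 := by
      rw [Zpart_eq hfe]
      simp only [ne_eq, ENNReal.ofReal_eq_zero, not_le]
      exact integral_exp_pos hfe
    calc ∫⁻ x, ENNReal.ofReal (Real.exp (|f x| / 2 + f x)) / Zpart n f ∂μ
        = (∫⁻ x, ENNReal.ofReal (Real.exp (|f x| / 2 + f x)) ∂μ) / Zpart n f := by
          simp_rw [ENNReal.div_eq_inv_mul]
          rw [lintegral_const_mul' _ _ (ENNReal.inv_ne_top.mpr hZ0)]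
      _ < ⊤ := ENNReal.div_lt_top hfe2 hZ0
  -- conclude
  have hfin : ∫⁻ x, ENNReal.ofReal |f x| ∂Q < ⊤ := by
    rw [h0]
    calc ∫⁻ x, v x * ENNReal.ofReal |f x| ∂P
        ≤ ∫⁻ x, 2 * ((‖(v x).toReal * llr Q P x‖₊ : ℝ≥0∞)
            + ENNReal.ofReal (Real.exp (|f x| / 2))) ∂P := lintegral_mono_ae hYoung
      _ = 2 * ((∫⁻ x, (‖(v x).toReal * llr Q P x‖₊ : ℝ≥0∞) ∂P)
            + ∫⁻ x, ENNReal.ofReal (Real.exp (|f x| / 2)) ∂P) := by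
          rw [lintegral_const_mul' _ _ (by norm_num), lintegral_add_left']
          exact (((Measure.measurable_rnDeriv Q P).ennreal_toReal.mul
            (measurable_llr Q P)).nnnorm.coe_nnreal_ennreal).aemeasurable
      _ < ⊤ := by
          refine ENNReal.mul_lt_top (by norm_num) ?_
          exact ENNReal.add_lt_top.mpr ⟨h1, h2⟩
  refine ⟨hf.aestronglyMeasurable, ?_⟩
  rw [HasFiniteIntegral]
  refine lt_of_le_of_lt (le_of_eq (lintegral_congr fun x => ?_)) hfin
  show (‖f x‖₊ : ℝ≥0∞) = ENNReal.ofReal |f x|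
  rw [← enorm_eq_nnnorm, Real.enorm_eq_ofReal_abs]


lemma relEnt_gibbs_eq
    (hfe : Integrable (fun x => Real.exp (f x)) (volume : Measure (Fin n → ℝ)))
    (hQv : Q ≪ (volume : Measure (Fin n → ℝ)))
    (hfQ : Integrable f Q) (ht : Integrable (tfun Q) (volume : Measure (Fin n → ℝ))) :
    relEnt Q (gibbs n f)
      = ENNReal.ofReal (∫ x, tfun Q x ∂(volume : Measure (Fin n → ℝ)) - ∫ x, f x ∂Q
          + Real.log (∫ x, Real.exp (f x) ∂(volume : Measure (Fin n → ℝ))))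
    ∧ 0 ≤ ∫ x, tfun Q x ∂(volume : Measure (Fin n → ℝ)) - ∫ x, f x ∂Q
          + Real.log (∫ x, Real.exp (f x) ∂(volume : Measure (Fin n → ℝ))) := by
  haveI := neZero_vol (n := n)
  have hQP : Q ≪ gibbs n f := by
    rw [gibbs_eq_tilted hfe]
    exact hQv.trans (absolutelyContinuous_tilted hfe)
  haveI : IsProbabilityMeasure (gibbs n f) := by
    rw [gibbs_eq_tilted hfe]; exact isProbabilityMeasure_tilted hfe
  have hI : Integrable (llr Q (gibbs n f)) Q := llr_gibbs_integrable hfe hQv hfQ ht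
  have hllrv : Integrable (llr Q (volume : Measure (Fin n → ℝ))) Q :=
    (integrable_mul_log_iff hQv).mp ht
  have hval : ∫ x, llr Q (gibbs n f) x ∂Q
      = ∫ x, tfun Q x ∂(volume : Measure (Fin n → ℝ)) - ∫ x, f x ∂Q
        + Real.log (∫ x, Real.exp (f x) ∂(volume : Measure (Fin n → ℝ))) := by
    have h1 : ∫ x, llr Q ((volume : Measure (Fin n → ℝ)).tilted f) x ∂Q
        = ∫ x, llr Q (volume : Measure (Fin n → ℝ)) x ∂Q - ∫ x, f x ∂Q
          + Real.log (∫ x, Real.exp (f x) ∂(volume : Measure (Fin n → ℝ))) :=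
      integral_llr_tilted_right hQv hfQ hfe hllrv
    rw [← gibbs_eq_tilted hfe] at h1
    rw [h1, ← integral_mul_log hQv]
    rfl
  have hnn : 0 ≤ ∫ x, llr Q (gibbs n f) x ∂Q := integral_llr_nonneg' hQP hI
  constructor
  · rw [relEnt, if_pos ⟨hQP, (integrable_mul_log_iff hQP).mpr hI⟩, integral_mul_log hQP, hval]
  · rw [← hval]; exact hnn

lemma key (hf : Continuous f)
    (hfe : Integrable (fun x => Real.exp (f x)) (volume : Measure (Fin n → ℝ)))
    (hfe2 : ∫⁻ x, ENNReal.ofReal (Real.exp (|f x| / 2 + f x))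
      ∂(volume : Measure (Fin n → ℝ)) ≠ ⊤) :
    MFObj f Q = ((Real.log (∫ x, Real.exp (f x) ∂(volume : Measure (Fin n → ℝ))) : ℝ) : EReal)
      - ((relEnt Q (gibbs n f) : ℝ≥0∞) : EReal) := by
  haveI := neZero_vol (n := n)
  haveI : IsProbabilityMeasure (gibbs n f) := by
    rw [gibbs_eq_tilted hfe]; exact isProbabilityMeasure_tilted hfe
  by_cases hQv : Q ≪ (volume : Measure (Fin n → ℝ))
  · by_cases hI : Integrable (llr Q (gibbs n f)) Q
    · have hfQ := integrable_f_of_llr hf hfe hfe2 hQv hI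
      have ht : Integrable (tfun Q) (volume : Measure (Fin n → ℝ)) := by
        have he := llr_tilted_right hQv hfe
        rw [← gibbs_eq_tilted hfe] at he
        have h2 : Integrable (fun x => llr Q (gibbs n f) x + f x
            - Real.log (∫ x, Real.exp (f x) ∂(volume : Measure (Fin n → ℝ)))) Q :=
          (hI.add hfQ).sub (integrable_const _)
        refine (integrable_mul_log_iff hQv).mpr (h2.congr ?_)
        filter_upwards [he] with x hx
        rw [hx]; ring
      obtain ⟨hR, hR0⟩ := relEnt_gibbs_eq hfe hQv hfQ ht
      rw [MFObj, intE_eq hfQ, hent_of_integrable hQv ht, hR, EReal.coe_ennreal_ofReal,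
        max_eq_left hR0, ← EReal.coe_sub, ← EReal.coe_sub]
      norm_cast
      ring
    · have hrel : relEnt Q (gibbs n f) = ⊤ := by
        rw [relEnt, if_neg]
        rintro ⟨h1, h2⟩
        exact hI ((integrable_mul_log_iff h1).mp h2)
      rw [hrel, EReal.coe_ennreal_top, EReal.sub_top, MFObj]
      by_cases ht : Integrable (tfun Q) (volume : Measure (Fin n → ℝ))
      · have hnf : ¬ Integrable f Q := fun hfQ => hI (llr_gibbs_integrable hfe hQv hfQ ht)
        have hneg : ∫⁻ x, ENNReal.ofReal (-f x) ∂Q = ⊤ := by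
          by_contra hneg
          refine hnf (integrable_of_ne_top hf.aestronglyMeasurable ?_ hneg)
          have h0 : ∫⁻ x, ENNReal.ofReal (f x) ∂Q
              = ∫⁻ x, Q.rnDeriv (volume : Measure (Fin n → ℝ)) x * ENNReal.ofReal (f x)
                ∂(volume : Measure (Fin n → ℝ)) :=
            (lintegral_rnDeriv_mul hQv (hf.measurable.ennreal_ofReal).aemeasurable).symm
          rw [h0]
          have hb : ∀ᵐ x ∂(volume : Measure (Fin n → ℝ)),
              Q.rnDeriv (volume : Measure (Fin n → ℝ)) x * ENNReal.ofReal (f x)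
              ≤ (‖tfun Q x‖₊ : ℝ≥0∞) + ENNReal.ofReal (Real.exp (f x)) := by
            filter_upwards [Q.rnDeriv_lt_top (volume : Measure (Fin n → ℝ))] with x hx
            rw [← ENNReal.ofReal_toReal hx.ne, ← ENNReal.ofReal_mul ENNReal.toReal_nonneg]
            calc ENNReal.ofReal ((Q.rnDeriv (volume : Measure (Fin n → ℝ)) x).toReal * f x)
                ≤ ENNReal.ofReal (max (tfun Q x) 0 + Real.exp (f x)) :=
                  ENNReal.ofReal_le_ofReal (young ENNReal.toReal_nonneg)
              _ = ENNReal.ofReal (max (tfun Q x) 0) + ENNReal.ofReal (Real.exp (f x)) :=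
                  ENNReal.ofReal_add (le_max_right _ _) (Real.exp_pos _).le
              _ ≤ _ := by
                  gcongr
                  rw [ofReal_max_zero, ← enorm_eq_nnnorm, Real.enorm_eq_ofReal_abs]
                  exact ENNReal.ofReal_le_ofReal (le_abs_self _)
          refine ne_top_of_le_ne_top ?_ (lintegral_mono_ae hb)
          rw [lintegral_add_left' (tfun_measurable.nnnorm.coe_nnreal_ennreal).aemeasurable]
          refine ENNReal.add_ne_top.mpr ⟨ht.hasFiniteIntegral.ne, ?_⟩
          rw [show (∫⁻ x, ENNReal.ofReal (Real.exp (f x)) ∂(volume : Measure (Fin n → ℝ)))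
            = Zpart n f from rfl, Zpart_eq hfe]
          exact ENNReal.ofReal_ne_top
        rw [intE_bot hneg, EReal.bot_sub]
      · rw [hent_top_of_not_integrable ht, EReal.sub_top]
  · have h1 : Hent Q = ⊤ := by
      rw [Hent, if_neg]
      rintro ⟨h, -⟩
      exact hQv h
    have h2 : relEnt Q (gibbs n f) = ⊤ := by
      rw [relEnt, if_neg]
      rintro ⟨h, -⟩
      refine hQv (h.trans ?_)
      rw [gibbs_eq_tilted hfe]
      exact tilted_absolutelyContinuous _ _
    rw [MFObj, h1, h2, EReal.sub_top, EReal.coe_ennreal_top, EReal.sub_top]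

end SpaceFacts


end Stmt18Aux

open Stmt18Aux

/-- Lemma 3.4: finiteness of the mean field supremum, integrability
at any optimizer, and the entropic-projection identity
`log ∫ e^f dx − sup_{Q product} (∫ f dQ − H(Q)) = inf_{Q product} H(Q | P)`. -/
theorem stmt_18 (n : ℕ) (f : (Fin n → ℝ) → ℝ) (κ c₁ c₂ : ℝ)
    (hκ : 0 < κ) (hC2 : ContDiff ℝ 2 f)
    (hconc : ConcaveOn ℝ Set.univ fun x => f x + κ / 2 * ∑ i, x i ^ 2)
    (hc₁ : 0 ≤ c₁) (hc₂ : 0 ≤ c₂) (hc₂' : c₂ < κ / 2)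
    (hgrowth : ∀ x, |f x| ≤ c₁ * Real.exp (c₂ * ∑ i, x i ^ 2)) :
    (⊥ < MFSup n f ∧ MFSup n f < ⊤) ∧
    (∀ Q : Measure (Fin n → ℝ), IsProductProb n Q → MFObj f Q = MFSup n f →
      Integrable f Q) ∧
    ((Real.log (Zpart n f).toReal : EReal) - MFSup n f
      = ((sInf {r : ℝ≥0∞ | ∃ Q : Measure (Fin n → ℝ), IsProductProb n Q ∧
          r = relEnt Q (gibbs n f)} : ℝ≥0∞) : EReal)) := by
  have hf : Continuous f := hC2.continuous
  obtain ⟨C, hub⟩ := exists_upper hκ hconc hc₁ hc₂ hgrowth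
  have hκ4 : (0:ℝ) < κ/4 := by linarith
  have hfe : Integrable (fun x => Real.exp (f x)) (volume : Measure (Fin n → ℝ)) := by
    refine (integrable_exp_quad n C (κ/4) hκ4).mono' hf.rexp.aestronglyMeasurable ?_
    filter_upwards with x
    rw [Real.norm_eq_abs, abs_of_pos (Real.exp_pos _)]
    exact Real.exp_le_exp.mpr (hub x)
  have hfe2' : Integrable (fun x => Real.exp (|f x| / 2 + f x))
      (volume : Measure (Fin n → ℝ)) := by
    refine (integrable_exp_quad n (3/2 * |C| + 3/2 * (κ/4)) (κ/8) (by linarith)).mono'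
      (((hf.abs.div_const 2).add hf).rexp.aestronglyMeasurable) ?_
    filter_upwards with x
    rw [Real.norm_eq_abs, abs_of_pos (Real.exp_pos _)]
    apply Real.exp_le_exp.mpr
    have hS : (0:ℝ) ≤ ∑ i, x i ^ 2 := Finset.sum_nonneg fun i _ => sq_nonneg _
    have h1 := hub x
    have hCle : C ≤ |C| := le_abs_self C
    have hC0 : (0:ℝ) ≤ |C| := abs_nonneg C
    rcases le_total 0 (f x) with h | h
    · rw [abs_of_nonneg h]; nlinarith
    · rw [abs_of_nonpos h]; nlinarith
  have hfe2 : ∫⁻ x, ENNReal.ofReal (Real.exp (|f x| / 2 + f x))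
      ∂(volume : Measure (Fin n → ℝ)) ≠ ⊤ := lint_pos_ne_top hfe2'
  haveI := neZero_vol (n := n)
  have hIpos : 0 < ∫ x, Real.exp (f x) ∂(volume : Measure (Fin n → ℝ)) :=
    integral_exp_pos hfe
  set L : ℝ := Real.log (∫ x, Real.exp (f x) ∂(volume : Measure (Fin n → ℝ))) with hL
  have hZL : Real.log (Zpart n f).toReal = L := by
    rw [Zpart_eq hfe, ENNReal.toReal_ofReal hIpos.le]
  have hprob : ∀ Q : Measure (Fin n → ℝ), IsProductProb n Q → IsProbabilityMeasure Q := by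
    rintro Q ⟨Qi, hQi, rfl⟩
    haveI : ∀ i, IsProbabilityMeasure (Qi i) := hQi
    constructor
    rw [Measure.pi_univ]
    simp [measure_univ]
  have hkeyQ : ∀ Q : Measure (Fin n → ℝ), IsProductProb n Q →
      MFObj f Q = (L : EReal) - ((relEnt Q (gibbs n f) : ℝ≥0∞) : EReal) := by
    intro Q hQ
    haveI := hprob Q hQ
    exact key hf hfe hfe2
  set Q₀ := (volume : Measure (Fin n → ℝ)).restrict (box n) with hQ₀
  haveI : IsProbabilityMeasure Q₀ := box_prob n
  have hprod₀ : IsProductProb n Q₀ :=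
    ⟨fun _ => (volume : Measure ℝ).restrict (Set.Icc 0 1), fun _ => prob_restrict,
      (pi_eq_box n).symm⟩
  have hr₀ : relEnt Q₀ (gibbs n f) ≠ ⊤ := by
    rw [(relEnt_gibbs_eq hfe (box_ac n) (box_f_integrable hf) (box_tfun_integrable n)).1]
    exact ENNReal.ofReal_ne_top
  have hle : MFSup n f ≤ (L : EReal) := by
    refine sSup_le ?_
    rintro e ⟨Q, hQ, rfl⟩
    rw [hkeyQ Q hQ]
    exact ereal_sub_ennreal_le L _
  have hge : (L : EReal) - ((relEnt Q₀ (gibbs n f) : ℝ≥0∞) : EReal) ≤ MFSup n f := by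
    rw [← hkeyQ Q₀ hprod₀]
    exact le_sSup ⟨Q₀, hprod₀, rfl⟩
  have hbot : (⊥ : EReal) < MFSup n f := by
    refine lt_of_lt_of_le ?_ hge
    rw [← coeE hr₀, ← EReal.coe_sub]
    exact EReal.bot_lt_coe _
  have htop : MFSup n f < ⊤ := lt_of_le_of_lt hle (EReal.coe_lt_top L)
  refine ⟨⟨hbot, htop⟩, ?_, ?_⟩
  · intro Q hQ hopt
    haveI := hprob Q hQ
    have hHtop : Hent Q ≠ ⊤ := by
      intro h
      rw [MFObj, h, EReal.sub_top] at hopt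
      exact absurd hopt.symm (ne_of_gt hbot)
    have hneg : ∫⁻ x, ENNReal.ofReal (-f x) ∂Q ≠ ⊤ := by
      intro h
      rw [MFObj, intE_bot h, EReal.bot_sub] at hopt
      exact absurd hopt.symm (ne_of_gt hbot)
    have hpos : ∫⁻ x, ENNReal.ofReal (f x) ∂Q ≠ ⊤ := by
      intro h
      rw [MFObj, intE, h, EReal.coe_ennreal_top, ← coeE hneg, EReal.top_sub_coe,
        ← EReal.coe_toReal hHtop hent_ne_bot, EReal.top_sub_coe] at hopt
      exact absurd hopt.symm (ne_of_lt htop)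
    exact integrable_of_ne_top hf.aestronglyMeasurable hpos hneg
  · rw [hZL]
    set R := {r : ℝ≥0∞ | ∃ Q : Measure (Fin n → ℝ), IsProductProb n Q ∧
        r = relEnt Q (gibbs n f)} with hR
    have hmem₀' : relEnt Q₀ (gibbs n f) ∈ R := ⟨Q₀, hprod₀, rfl⟩
    have hminf : sInf R ≠ ⊤ := by
      intro h
      exact hr₀ (top_le_iff.mp (h ▸ sInf_le hmem₀'))
    have hS : ((MFSup n f).toReal : EReal) = MFSup n f :=
      EReal.coe_toReal (ne_of_lt htop) (ne_of_gt hbot)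
    have hSle : (MFSup n f).toReal ≤ L := by
      have h := hle
      rw [← hS] at h
      exact EReal.coe_le_coe_iff.mp h
    set m : ℝ≥0∞ := ENNReal.ofReal (L - (MFSup n f).toReal) with hm
    have hcoe : (L : EReal) - MFSup n f = (m : EReal) := by
      rw [← hS, ← EReal.coe_sub, hm, EReal.coe_ennreal_ofReal,
        max_eq_left (by linarith : (0:ℝ) ≤ L - (MFSup n f).toReal)]
    rw [hcoe]
    have hm_eq : m = sInf R := by
      apply le_antisymm
      · refine le_sInf ?_
        rintro r ⟨Q, hQ, rfl⟩
        have h1 : (L : EReal) - ((relEnt Q (gibbs n f) : ℝ≥0∞) : EReal) ≤ MFSup n f := by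
          rw [← hkeyQ Q hQ]
          exact le_sSup ⟨Q, hQ, rfl⟩
        have h2 : (m : EReal) ≤ ((relEnt Q (gibbs n f) : ℝ≥0∞) : EReal) :=
          calc (m : EReal) = (L : EReal) - MFSup n f := hcoe.symm
            _ ≤ (L : EReal) - ((L : EReal) - ((relEnt Q (gibbs n f) : ℝ≥0∞) : EReal)) :=
              ereal_sub_le_sub L h1
            _ ≤ _ := ereal_sub_sub_le L _
        exact EReal.coe_ennreal_le_coe_ennreal_iff.mp h2
      · have h1 : MFSup n f ≤ (L : EReal) - ((sInf R : ℝ≥0∞) : EReal) := by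
          refine sSup_le ?_
          rintro e ⟨Q, hQ, rfl⟩
          rw [hkeyQ Q hQ]
          exact ereal_sub_le_sub L
            (EReal.coe_ennreal_le_coe_ennreal_iff.mpr (sInf_le ⟨Q, hQ, rfl⟩))
        have h2 : ((sInf R : ℝ≥0∞) : EReal) ≤ (m : EReal) :=
          calc ((sInf R : ℝ≥0∞) : EReal)
              = (L : EReal) - ((L : EReal) - ((sInf R : ℝ≥0∞) : EReal)) :=
                (ereal_sub_sub_cancel L hminf).symm
            _ ≤ (L : EReal) - MFSup n f := ereal_sub_le_sub L h1
            _ = (m : EReal) := hcoe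
        exact EReal.coe_ennreal_le_coe_ennreal_iff.mp h2
    rw [hm_eq]


end
end

section
/- Let Q₁,…,Qₙ be probability measures on ℝ and let t₁,…,tₙ ∈ [0,1] with Σᵢ₌₁ⁿ tᵢ = 1. Then there exists a random vector X = (X₁,…,Xₙ) (on some probability space) such that Xᵢ has law Qᵢ for each i and H(Law(Σᵢ₌₁ⁿ tᵢXᵢ)) ≤ Σᵢ₌₁ⁿ tᵢH(Qᵢ). -/
open MeasureTheory Real Filter Topology ProbabilityTheory
open scoped ENNReal NNReal BigOperators Classical

noncomputable section

namespace Stmt19Aux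

section Quantile


/-- base measure : uniform on (0,1) -/
def nu : Measure ℝ := volume.restrict (Set.Ioo (0:ℝ) 1)

instance : IsProbabilityMeasure nu :=
  ⟨by simp [nu, Measure.restrict_apply_univ, Real.volume_Ioo]⟩

/-- quantile function -/
def qf (Q : Measure ℝ) (u : ℝ) : ℝ :=
  if u ∈ Set.Ioo (0:ℝ) 1 then sInf {x | u ≤ cdf Q x} else 0

variable {Q : Measure ℝ} [IsProbabilityMeasure Q]

lemma qf_set_nonempty {u : ℝ} (hu : u ∈ Set.Ioo (0:ℝ) 1) :
    {x | u ≤ cdf Q x}.Nonempty := by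
  have h := tendsto_cdf_atTop Q
  have : ∀ᶠ y in atTop, cdf Q y ∈ Set.Ioi u :=
    h (Ioi_mem_nhds (by exact hu.2))
  rcases this.exists with ⟨y, hy⟩
  exact ⟨y, show u ≤ cdf Q y from le_of_lt hy⟩

lemma qf_set_bddBelow {u : ℝ} (hu : u ∈ Set.Ioo (0:ℝ) 1) :
    BddBelow {x | u ≤ cdf Q x} := by
  have h := tendsto_cdf_atBot Q
  have : ∀ᶠ y in atBot, cdf Q y ∈ Set.Iio u :=
    h (Iio_mem_nhds (by exact hu.1))
  rcases this.exists with ⟨z, hz⟩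
  refine ⟨z, fun y hy => ?_⟩
  by_contra hzy
  push_neg at hzy
  exact absurd (le_trans hy ((cdf Q).mono hzy.le)) (not_le.2 hz)

lemma le_cdf_qf {u : ℝ} (hu : u ∈ Set.Ioo (0:ℝ) 1) : u ≤ cdf Q (qf Q u) := by
  rw [qf, if_pos hu]
  set c := sInf {x | u ≤ cdf Q x} with hc
  have hne := qf_set_nonempty (Q := Q) hu
  have hbdd := qf_set_bddBelow (Q := Q) hu
  have hcl : c ∈ closure {x | u ≤ cdf Q x} := csInf_mem_closure hne hbdd
  have hsub : {x | u ≤ cdf Q x} ⊆ Set.Ici c := fun y hy => csInf_le hbdd hy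
  have hcont : ContinuousWithinAt (cdf Q) {x | u ≤ cdf Q x} c :=
    ((cdf Q).right_continuous c).mono hsub
  have hne' : (𝓝[{x | u ≤ cdf Q x}] c).NeBot := mem_closure_iff_nhdsWithin_neBot.1 hcl
  exact ge_of_tendsto hcont (eventually_mem_nhdsWithin.mono fun y hy => hy)

lemma qf_le_iff {u x : ℝ} (hu : u ∈ Set.Ioo (0:ℝ) 1) :
    qf Q u ≤ x ↔ u ≤ cdf Q x := by
  constructor
  · intro h
    exact le_trans (le_cdf_qf hu) ((cdf Q).mono h)
  · intro h
    rw [qf, if_pos hu]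
    exact csInf_le (qf_set_bddBelow hu) h

lemma qf_monotoneOn : MonotoneOn (qf Q) (Set.Ioo (0:ℝ) 1) := by
  intro u hu v hv huv
  exact (qf_le_iff hu).2 (le_trans huv (le_cdf_qf hv))

lemma qf_measurable : Measurable (qf Q) := by
  apply measurable_of_Iic
  intro x
  have : qf Q ⁻¹' Set.Iic x =
      (Set.Ioo (0:ℝ) 1 ∩ Set.Iic (cdf Q x)) ∪
        ((Set.Ioo (0:ℝ) 1)ᶜ ∩ {u : ℝ | (0:ℝ) ≤ x}) := by
    ext u
    by_cases hu : u ∈ Set.Ioo (0:ℝ) 1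
    · simp only [Set.mem_preimage, Set.mem_Iic, Set.mem_union, Set.mem_inter_iff, hu,
        Set.mem_compl_iff, not_true, false_and, or_false, true_and, Set.mem_setOf_eq]
      exact qf_le_iff hu
    · simp only [Set.mem_preimage, Set.mem_Iic, qf, if_neg hu, Set.mem_union, Set.mem_inter_iff,
        hu, false_and, false_or, Set.mem_compl_iff, not_false_iff, true_and, Set.mem_setOf_eq,
        if_false]
  rw [this]
  by_cases hx : (0:ℝ) ≤ x
  · have : {u : ℝ | (0:ℝ) ≤ x} = Set.univ := by ext u; simp [hx]
    rw [this]
    exact (measurableSet_Ioo.inter measurableSet_Iic).union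
      (measurableSet_Ioo.compl.inter MeasurableSet.univ)
  · have : {u : ℝ | (0:ℝ) ≤ x} = ∅ := by ext u; simp [hx]
    rw [this]
    simp only [Set.inter_empty, Set.union_empty]
    exact measurableSet_Ioo.inter measurableSet_Iic

lemma volume_Ioo_inter_Iic {c : ℝ} (h0 : 0 ≤ c) (h1 : c ≤ 1) :
    volume (Set.Ioo (0:ℝ) 1 ∩ Set.Iic c) = ENNReal.ofReal c := by
  apply le_antisymm
  · have hsub : Set.Ioo (0:ℝ) 1 ∩ Set.Iic c ⊆ Set.Ioc (0:ℝ) c :=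
      fun u hu => ⟨hu.1.1, hu.2⟩
    calc volume (Set.Ioo (0:ℝ) 1 ∩ Set.Iic c) ≤ volume (Set.Ioc (0:ℝ) c) :=
          measure_mono hsub
      _ = ENNReal.ofReal c := by rw [Real.volume_Ioc, sub_zero]
  · have hsub : Set.Ioo (0:ℝ) c ⊆ Set.Ioo (0:ℝ) 1 ∩ Set.Iic c := by
      intro u hu
      exact ⟨⟨hu.1, lt_of_lt_of_le hu.2 h1⟩, hu.2.le⟩
    calc ENNReal.ofReal c = volume (Set.Ioo (0:ℝ) c) := by rw [Real.volume_Ioo, sub_zero]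
      _ ≤ volume (Set.Ioo (0:ℝ) 1 ∩ Set.Iic c) := measure_mono hsub

lemma qf_map : nu.map (qf Q) = Q := by
  haveI : IsProbabilityMeasure (nu.map (qf Q)) :=
    Measure.isProbabilityMeasure_map qf_measurable.aemeasurable
  refine Measure.ext_of_Iic (nu.map (qf Q)) Q (fun x => ?_)
  rw [Measure.map_apply qf_measurable measurableSet_Iic]
  rw [nu, Measure.restrict_apply' measurableSet_Ioo]
  have : qf Q ⁻¹' Set.Iic x ∩ Set.Ioo (0:ℝ) 1 = Set.Ioo (0:ℝ) 1 ∩ Set.Iic (cdf Q x) := by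
    ext u
    constructor
    · rintro ⟨h1, h2⟩
      exact ⟨h2, (qf_le_iff h2).1 h1⟩
    · rintro ⟨h1, h2⟩
      exact ⟨(qf_le_iff h1).2 h2, h1⟩
  rw [this, volume_Ioo_inter_Iic (cdf_nonneg Q x) (cdf_le_one Q x), ofReal_cdf]

lemma qf_strictMonoOn (hatom : ∀ x : ℝ, Q {x} = 0) :
    StrictMonoOn (qf Q) (Set.Ioo (0:ℝ) 1) := by
  intro u hu v hv huv
  rcases lt_or_eq_of_le (qf_monotoneOn (Q := Q) hu hv huv.le) with h | h
  · exact h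
  exfalso
  set x := qf Q v with hx
  have hvFx : v ≤ cdf Q x := le_cdf_qf hv
  have hylt : ∀ y, y < x → cdf Q y < u := by
    intro y hy
    by_contra hcon
    push_neg at hcon
    have : qf Q u ≤ y := (qf_le_iff hu).2 hcon
    rw [← h] at hy
    exact absurd (lt_of_le_of_lt this hy) (lt_irrefl _)
  have hleft : Function.leftLim (cdf Q) x ≤ u := by
    have htend : Tendsto (cdf Q) (𝓝[<] x) (𝓝 (Function.leftLim (cdf Q) x)) :=
      Monotone.tendsto_leftLim (cdf Q).mono x
    refine le_of_tendsto htend ?_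
    filter_upwards [self_mem_nhdsWithin] with y hy
    exact (hylt y hy).le
  have hQx : Q {x} = ENNReal.ofReal (cdf Q x - Function.leftLim (cdf Q) x) := by
    conv_lhs => rw [← measure_cdf Q]
    exact (cdf Q).measure_singleton x
  have hpos : (0:ℝ) < cdf Q x - Function.leftLim (cdf Q) x := by
    have : v - u ≤ cdf Q x - Function.leftLim (cdf Q) x := sub_le_sub hvFx hleft
    linarith
  rw [hatom x] at hQx
  exact absurd hQx.symm (by simp [ENNReal.ofReal_pos.2 hpos, ne_of_gt])


end Quantile

section Deriv




variable {S : ℝ → ℝ}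

lemma ae_hasDerivAt (hmono : MonotoneOn S (Set.Ioo (0:ℝ) 1)) :
    ∀ᵐ u ∂nu, HasDerivAt S (deriv S u) u := by
  have h := hmono.ae_differentiableWithinAt measurableSet_Ioo
  have h2 : ∀ᵐ u ∂nu, u ∈ Set.Ioo (0:ℝ) 1 := ae_restrict_mem measurableSet_Ioo
  rw [show volume.restrict (Set.Ioo (0:ℝ) 1) = nu from rfl] at h
  filter_upwards [h, h2] with u hdiff hu
  exact ((hdiff.differentiableAt (isOpen_Ioo.mem_nhds hu)).hasDerivAt)

lemma deriv_nonneg_of_monotoneOn (hmono : MonotoneOn S (Set.Ioo (0:ℝ) 1))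
    {u : ℝ} (hu : u ∈ Set.Ioo (0:ℝ) 1) (hd : HasDerivAt S (deriv S u) u) :
    0 ≤ deriv S u := by
  have htend : Tendsto (slope S u) (𝓝[>] u) (𝓝 (deriv S u)) :=
    (hasDerivAt_iff_tendsto_slope.1 hd).mono_left
      (nhdsWithin_mono u (fun y hy => ne_of_gt hy))
  refine ge_of_tendsto htend ?_
  have hIoo : Set.Ioo u 1 ∈ 𝓝[>] u := Ioo_mem_nhdsGT_of_mem ⟨le_refl u, hu.2⟩
  filter_upwards [hIoo] with y hy
  have hy' : y ∈ Set.Ioo (0:ℝ) 1 := ⟨lt_trans hu.1 hy.1, hy.2⟩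
  rw [slope_def_field]
  have h1 : S u ≤ S y := hmono hu hy' hy.1.le
  have h2 : (0:ℝ) < y - u := by linarith [hy.1]
  have : (0:ℝ) ≤ (S y - S u) / (y - u) := div_nonneg (by linarith) h2.le
  simpa [div_eq_iff, slope] using this

/-- change of variables on a nice set -/
lemma cv_lintegral {B : Set ℝ} (hB : MeasurableSet B)
    (hder : ∀ u ∈ B, HasDerivAt S (deriv S u) u)
    (hpos : ∀ u ∈ B, 0 ≤ deriv S u)
    (hinj : Set.InjOn S B) (g : ℝ → ℝ≥0∞) :
    ∫⁻ x in S '' B, g x = ∫⁻ u in B, ENNReal.ofReal (deriv S u) * g (S u) := by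
  have h := lintegral_image_eq_lintegral_abs_det_fderiv_mul volume hB
    (fun x hx => ((hder x hx).hasDerivWithinAt).hasFDerivWithinAt) hinj g
  rw [h]
  apply setLIntegral_congr_fun hB
  intro u hu
  beta_reduce
  rw [ContinuousLinearMap.det_toSpanSingleton, abs_of_nonneg (hpos u hu)]

/-- a measurable co-null (in (0,1)) set of good points -/
lemma exists_good_set (p : ℝ → Prop) (hp : ∀ᵐ u ∂nu, p u) :
    ∃ D : Set ℝ, MeasurableSet D ∧ D ⊆ Set.Ioo (0:ℝ) 1 ∧
      (∀ u ∈ D, p u ∧ u ∈ Set.Ioo (0:ℝ) 1) ∧ nu ((Set.Ioo (0:ℝ) 1) \ D) = 0 := by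
  have h0 : nu {u | ¬ p u} = 0 := hp
  rw [nu, Measure.restrict_apply' measurableSet_Ioo] at h0
  set N := {u | ¬ p u} ∩ Set.Ioo (0:ℝ) 1 with hN
  set M := toMeasurable volume N with hM
  have hMmeas : MeasurableSet M := measurableSet_toMeasurable _ _
  have hM0 : volume M = 0 := by rw [hM, measure_toMeasurable]; exact h0
  refine ⟨Set.Ioo (0:ℝ) 1 \ M, measurableSet_Ioo.diff hMmeas, Set.diff_subset, ?_, ?_⟩
  · rintro u ⟨hu1, hu2⟩
    refine ⟨?_, hu1⟩
    by_contra hcon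
    exact hu2 (subset_toMeasurable volume N ⟨hcon, hu1⟩)
  · have : Set.Ioo (0:ℝ) 1 \ (Set.Ioo (0:ℝ) 1 \ M) ⊆ M := by
      intro u hu
      rcases hu with ⟨h1, h2⟩
      by_contra hc
      exact h2 ⟨h1, hc⟩
    refine measure_mono_null this ?_
    rw [nu, Measure.restrict_apply' measurableSet_Ioo]
    exact measure_mono_null Set.inter_subset_left hM0


lemma map_absolutelyContinuous (hmono : MonotoneOn S (Set.Ioo (0:ℝ) 1))
    (hstrict : StrictMonoOn S (Set.Ioo (0:ℝ) 1)) (hS : Measurable S)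
    (hpos : ∀ᵐ u ∂nu, 0 < deriv S u) : nu.map S ≪ volume := by
  refine Measure.AbsolutelyContinuous.mk (fun A hA hA0 => ?_)
  rw [Measure.map_apply hS hA, nu, Measure.restrict_apply' measurableSet_Ioo]
  obtain ⟨D, hDmeas, hDsub, hDgood, hDnull⟩ :=
    exists_good_set (fun u => HasDerivAt S (deriv S u) u ∧ 0 < deriv S u)
      ((ae_hasDerivAt hmono).and hpos)
  set B := S ⁻¹' A ∩ D with hBdef
  have hBmeas : MeasurableSet B := (hS hA).inter hDmeas
  have hBD : B ⊆ D := Set.inter_subset_right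
  have hcv := cv_lintegral hBmeas
    (fun u hu => (hDgood u (hBD hu)).1.1)
    (fun u hu => (hDgood u (hBD hu)).1.2.le)
    (hstrict.injOn.mono (fun u hu => hDsub (hBD hu))) (fun _ => 1)
  have himg : S '' B ⊆ A := by
    rintro y ⟨u, hu, rfl⟩
    exact hu.1
  have himg0 : volume (S '' B) = 0 := measure_mono_null himg hA0
  simp only [mul_one] at hcv
  have h1 : ∫⁻ u in B, ENNReal.ofReal (deriv S u) = 0 := by
    rw [← hcv]
    simpa using himg0
  have hB0 : volume B = 0 := by
    by_contra hc
    have hmeasd : Measurable (fun u => ENNReal.ofReal (deriv S u)) :=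
      (measurable_deriv S).ennreal_ofReal
    have := (lintegral_eq_zero_iff hmeasd).1 h1
    have hae : ∀ᵐ u ∂(volume.restrict B), u ∈ B := ae_restrict_mem hBmeas
    have : ∀ᵐ u ∂(volume.restrict B), False := by
      filter_upwards [this, hae] with u h0 huB
      have := (hDgood u (hBD huB)).1.2
      rw [Pi.zero_apply] at h0
      exact absurd h0 (by simp [ENNReal.ofReal_pos.2 this, ne_of_gt])
    have hzero : volume.restrict B {u | ¬ False} = 0 := this
    simp only [not_false_iff] at hzero
    rw [show {u : ℝ | True} = Set.univ from rfl, Measure.restrict_apply_univ] at hzero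
    exact hc hzero
  have hsub2 : S ⁻¹' A ∩ Set.Ioo (0:ℝ) 1 ⊆ B ∪ (Set.Ioo (0:ℝ) 1 \ D) := by
    rintro u ⟨h1, h2⟩
    by_cases hD : u ∈ D
    · exact Or.inl ⟨h1, hD⟩
    · exact Or.inr ⟨h2, hD⟩
  refine measure_mono_null hsub2 (measure_union_null hB0 ?_)
  rw [nu, Measure.restrict_apply' measurableSet_Ioo] at hDnull
  exact measure_mono_null (fun u hu => Set.mem_inter hu hu.1) hDnull

lemma rnDeriv_mul_deriv_ae (hmono : MonotoneOn S (Set.Ioo (0:ℝ) 1))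
    (hstrict : StrictMonoOn S (Set.Ioo (0:ℝ) 1)) (hS : Measurable S)
    (hac : nu.map S ≪ volume) :
    ∀ᵐ u ∂nu, ENNReal.ofReal (deriv S u) * (nu.map S).rnDeriv volume (S u) = 1 := by
  haveI : IsProbabilityMeasure (nu.map S) := Measure.isProbabilityMeasure_map hS.aemeasurable
  set ρ := (nu.map S).rnDeriv volume with hρ
  have hρmeas : Measurable ρ := Measure.measurable_rnDeriv _ _
  obtain ⟨D, hDmeas, hDsub, hDgood, hDnull⟩ :=
    exists_good_set (fun u => HasDerivAt S (deriv S u) u ∧ 0 ≤ deriv S u)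
      (by
        filter_upwards [ae_hasDerivAt hmono, ae_restrict_mem measurableSet_Ioo] with u h hu
        exact ⟨h, deriv_nonneg_of_monotoneOn hmono hu h⟩)
  set f : ℝ → ℝ≥0∞ := fun u => ENNReal.ofReal (deriv S u) * ρ (S u) with hf
  have hfmeas : Measurable f := (measurable_deriv S).ennreal_ofReal.mul (hρmeas.comp hS)
  have key : f =ᵐ[volume.restrict D] (fun _ => 1) := by
    refine ae_eq_of_forall_setLIntegral_eq_of_sigmaFinite₀
      hfmeas.aemeasurable measurable_const.aemeasurable (fun s hs _ => ?_)
    rw [Measure.restrict_restrict hs]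
    set B := s ∩ D with hBdef
    have hBmeas : MeasurableSet B := hs.inter hDmeas
    have hBD : B ⊆ D := Set.inter_subset_right
    have hBIoo : B ⊆ Set.Ioo (0:ℝ) 1 := fun u hu => hDsub (hBD hu)
    have hinjB : Set.InjOn S B := hstrict.injOn.mono hBIoo
    have hcv := cv_lintegral hBmeas
      (fun u hu => (hDgood u (hBD hu)).1.1)
      (fun u hu => (hDgood u (hBD hu)).1.2)
      hinjB ρ
    have himgmeas : MeasurableSet (S '' B) :=
      hBmeas.image_of_measurable_injOn hS hinjB
    have hPimg : ∫⁻ x in S '' B, ρ x = (nu.map S) (S '' B) :=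
      Measure.setLIntegral_rnDeriv hac _
    have hpre : S ⁻¹' (S '' B) ∩ Set.Ioo (0:ℝ) 1 = B := by
      ext u
      constructor
      · rintro ⟨⟨b, hb, hbeq⟩, hu⟩
        have : b = u := hstrict.injOn (hBIoo hb) hu hbeq
        exact this ▸ hb
      · intro hu
        exact ⟨⟨u, hu, rfl⟩, hBIoo hu⟩
    have : (nu.map S) (S '' B) = volume B := by
      rw [Measure.map_apply hS himgmeas, nu, Measure.restrict_apply' measurableSet_Ioo, hpre]
    calc ∫⁻ u in B, f u = ∫⁻ x in S '' B, ρ x := by rw [hcv]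
      _ = volume B := by rw [hPimg, this]
      _ = ∫⁻ _ in B, (1:ℝ≥0∞) := by rw [setLIntegral_one]
  -- now transfer to nu
  have hDnull' : volume (Set.Ioo (0:ℝ) 1 \ D) = 0 := by
    rw [nu, Measure.restrict_apply' measurableSet_Ioo] at hDnull
    exact measure_mono_null (fun u hu => Set.mem_inter hu hu.1) hDnull
  have hkey' : volume ({u | ¬ f u = 1} ∩ D) = 0 := by
    have h := ae_iff.1 key
    rwa [Measure.restrict_apply' hDmeas] at h
  rw [ae_iff, nu, Measure.restrict_apply' measurableSet_Ioo]
  have hsub : {u | ¬ f u = 1} ∩ Set.Ioo (0:ℝ) 1 ⊆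
      ({u | ¬ f u = 1} ∩ D) ∪ (Set.Ioo (0:ℝ) 1 \ D) := by
    rintro u ⟨h1, h2⟩
    by_cases hD : u ∈ D
    · exact Or.inl ⟨h1, hD⟩
    · exact Or.inr ⟨h2, hD⟩
  exact measure_mono_null hsub (measure_union_null hkey' hDnull')


end Deriv

section Transfer




variable {T : ℝ → ℝ} {P : Measure ℝ}

lemma rbar_measurable (P : Measure ℝ) : Measurable (fun x => (P.rnDeriv volume x).toReal) :=
  (Measure.measurable_rnDeriv P volume).ennreal_toReal

lemma logr_measurable (P : Measure ℝ) :
    Measurable (fun x => Real.log ((P.rnDeriv volume x).toReal)) :=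
  Real.measurable_log.comp (rbar_measurable P)

lemma min_eq_smul (P : Measure ℝ) :
    (fun x => min ((P.rnDeriv volume x).toReal * Real.log (P.rnDeriv volume x).toReal) 0)
      = fun x => (P.rnDeriv volume x).toReal •
          min (Real.log ((P.rnDeriv volume x).toReal)) 0 := by
  funext x
  set a := (P.rnDeriv volume x).toReal with ha
  have h0 : (0:ℝ) ≤ a := ENNReal.toReal_nonneg
  rw [smul_eq_mul, mul_min_of_nonneg _ _ h0, mul_zero]

lemma min_transfer [IsFiniteMeasure P] (hT : Measurable T) (hP : nu.map T = P)
    (hac : P ≪ volume) :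
    Integrable (fun x =>
        min ((P.rnDeriv volume x).toReal * Real.log (P.rnDeriv volume x).toReal) 0) volume
      ↔ Integrable (fun u => min (Real.log ((P.rnDeriv volume (T u)).toReal)) 0) nu := by
  rw [min_eq_smul P, MeasureTheory.integrable_rnDeriv_smul_iff hac]
  have hmeas : AEStronglyMeasurable
      (fun x => min (Real.log ((P.rnDeriv volume x).toReal)) 0) P :=
    ((logr_measurable P).min measurable_const).aestronglyMeasurable
  rw [← hP] at hmeas ⊢
  exact integrable_map_measure hmeas hT.aemeasurable

lemma min_integral_transfer [IsFiniteMeasure P] (hT : Measurable T) (hP : nu.map T = P)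
    (hac : P ≪ volume) :
    ∫ x, min ((P.rnDeriv volume x).toReal * Real.log (P.rnDeriv volume x).toReal) 0
      = ∫ u, min (Real.log ((P.rnDeriv volume (T u)).toReal)) 0 ∂nu := by
  rw [min_eq_smul P, MeasureTheory.integral_rnDeriv_smul hac]
  have hmeas : AEStronglyMeasurable
      (fun x => min (Real.log ((P.rnDeriv volume x).toReal)) 0) P :=
    ((logr_measurable P).min measurable_const).aestronglyMeasurable
  rw [← hP] at hmeas ⊢
  exact integral_map hT.aemeasurable hmeas

lemma pos_transfer [IsFiniteMeasure P] (hT : Measurable T) (hP : nu.map T = P)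
    (hac : P ≪ volume) :
    ∫⁻ x, ENNReal.ofReal
        ((P.rnDeriv volume x).toReal * Real.log (P.rnDeriv volume x).toReal)
      = ∫⁻ u, ENNReal.ofReal (Real.log ((P.rnDeriv volume (T u)).toReal)) ∂nu := by
  have hcongr : ∀ᵐ x ∂(volume : Measure ℝ),
      ENNReal.ofReal ((P.rnDeriv volume x).toReal * Real.log (P.rnDeriv volume x).toReal)
        = P.rnDeriv volume x * ENNReal.ofReal (Real.log ((P.rnDeriv volume x).toReal)) := by
    filter_upwards [Measure.rnDeriv_lt_top P volume] with x hx
    set a := P.rnDeriv volume x with ha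
    rcases le_or_gt (Real.log a.toReal) 0 with h | h
    · rw [ENNReal.ofReal_of_nonpos (mul_nonpos_of_nonneg_of_nonpos ENNReal.toReal_nonneg h),
        ENNReal.ofReal_of_nonpos h, mul_zero]
    · rw [ENNReal.ofReal_mul ENNReal.toReal_nonneg, ENNReal.ofReal_toReal hx.ne]
  rw [lintegral_congr_ae hcongr,
    MeasureTheory.lintegral_rnDeriv_mul hac ((logr_measurable P).ennreal_ofReal.aemeasurable)]
  have h := lintegral_map (μ := nu) (g := T)
    (f := fun x => ENNReal.ofReal (Real.log ((P.rnDeriv volume x).toReal)))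
    (logr_measurable P).ennreal_ofReal hT
  rw [hP] at h
  exact h

lemma integrable_of_parts {f : ℝ → ℝ} (hmeas : Measurable f)
    (hmin : Integrable (fun u => min (f u) 0) nu)
    (hpos : ∫⁻ u, ENNReal.ofReal (f u) ∂nu ≠ ⊤) :
    Integrable f nu := by
  have hofReal : ∀ u, ENNReal.ofReal (max (f u) 0) = ENNReal.ofReal (f u) := by
    intro u
    rcases le_total (f u) 0 with h | h
    · rw [max_eq_right h, ENNReal.ofReal_of_nonpos h, ENNReal.ofReal_zero]
    · rw [max_eq_left h]
  have hnn : (0:ℝ → ℝ) ≤ᵐ[nu] fun u => max (f u) 0 :=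
    Filter.Eventually.of_forall fun u => le_max_right _ _
  have hmax : Integrable (fun u => max (f u) 0) nu := by
    refine ⟨(hmeas.max measurable_const).aestronglyMeasurable,
      (hasFiniteIntegral_iff_ofReal hnn).2 ?_⟩
    simpa only [hofReal] using hpos.lt_top
  have : f = fun u => max (f u) 0 + min (f u) 0 := by
    funext u; rw [max_add_min, add_zero]
  rw [this]
  exact hmax.add hmin

lemma integral_eq_parts {f : ℝ → ℝ} (hmeas : Measurable f)
    (hmin : Integrable (fun u => min (f u) 0) nu)
    (hpos : ∫⁻ u, ENNReal.ofReal (f u) ∂nu ≠ ⊤) :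
    ∫ u, f u ∂nu = (∫⁻ u, ENNReal.ofReal (f u) ∂nu).toReal + ∫ u, min (f u) 0 ∂nu := by
  have hofReal : ∀ u, ENNReal.ofReal (max (f u) 0) = ENNReal.ofReal (f u) := by
    intro u
    rcases le_total (f u) 0 with h | h
    · rw [max_eq_right h, ENNReal.ofReal_of_nonpos h, ENNReal.ofReal_zero]
    · rw [max_eq_left h]
  have hnn : (0:ℝ → ℝ) ≤ᵐ[nu] fun u => max (f u) 0 :=
    Filter.Eventually.of_forall fun u => le_max_right _ _
  have hmax : Integrable (fun u => max (f u) 0) nu :=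
    ⟨(hmeas.max measurable_const).aestronglyMeasurable,
      (hasFiniteIntegral_iff_ofReal hnn).2 (by simpa only [hofReal] using hpos.lt_top)⟩
  have h1 : ∫ u, max (f u) 0 ∂nu = (∫⁻ u, ENNReal.ofReal (f u) ∂nu).toReal := by
    rw [integral_eq_lintegral_of_nonneg_ae hnn (hmeas.max measurable_const).aestronglyMeasurable]
    congr 1
    exact lintegral_congr hofReal
  have : (fun u => f u) = fun u => max (f u) 0 + min (f u) 0 := by
    funext u; rw [max_add_min, add_zero]
  calc ∫ u, f u ∂nu = ∫ u, (max (f u) 0 + min (f u) 0) ∂nu := by rw [← this]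
    _ = ∫ u, max (f u) 0 ∂nu + ∫ u, min (f u) 0 ∂nu := integral_add hmax hmin
    _ = _ := by rw [h1]

lemma ereal_coe_ennreal_ne_top {x : ℝ≥0∞} (hx : x ≠ ⊤) :
    (x : EReal) = ((x.toReal : ℝ) : EReal) := by
  lift x to ℝ≥0 using hx
  rw [EReal.coe_nnreal_eq_coe_real, ENNReal.coe_toReal]

/-- main computation of Hent via the base (0,1) variable -/
lemma Hent_eq_integral [IsProbabilityMeasure P] (hT : Measurable T) (hP : nu.map T = P)
    (hac : P ≪ volume)
    (hmin : Integrable (fun u => min (Real.log ((P.rnDeriv volume (T u)).toReal)) 0) nu)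
    (hpos : ∫⁻ u, ENNReal.ofReal (Real.log ((P.rnDeriv volume (T u)).toReal)) ∂nu ≠ ⊤) :
    Integrable (fun u => Real.log ((P.rnDeriv volume (T u)).toReal)) nu ∧
      Hent P = ((∫ u, Real.log ((P.rnDeriv volume (T u)).toReal) ∂nu : ℝ) : EReal) := by
  have hfmeas : Measurable (fun u => Real.log ((P.rnDeriv volume (T u)).toReal)) :=
    (logr_measurable P).comp hT
  refine ⟨integrable_of_parts hfmeas hmin hpos, ?_⟩
  rw [Hent, if_pos ⟨hac, (min_transfer hT hP hac).2 hmin⟩]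
  rw [pos_transfer hT hP hac, min_integral_transfer hT hP hac,
    ereal_coe_ennreal_ne_top hpos, integral_eq_parts hfmeas hmin hpos, EReal.coe_add]


end Transfer

section Helpers

lemma Hent_ne_bot {α : Type*} [MeasureSpace α] (Q : Measure α) : Hent Q ≠ ⊥ := by
  rw [Hent]
  split_ifs with h
  · intro hcon
    rcases EReal.add_eq_bot_iff.1 hcon with h1 | h1
    · exact EReal.coe_ennreal_ne_bot _ h1
    · exact EReal.coe_ne_bot _ h1
  · simp

lemma ereal_sum_ne_bot {ι : Type*} (s : Finset ι) (f : ι → EReal)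
    (h : ∀ i ∈ s, f i ≠ ⊥) : ∑ i ∈ s, f i ≠ ⊥ := by
  classical
  induction s using Finset.induction_on with
  | empty => simp
  | @insert a s' hni ih =>
    rw [Finset.sum_insert hni]
    intro hcon
    rcases EReal.add_eq_bot_iff.1 hcon with h1 | h1
    · exact h a (Finset.mem_insert_self _ _) h1
    · exact ih (fun i hi => h i (Finset.mem_insert_of_mem hi)) h1

lemma ereal_coe_sum {ι : Type*} (s : Finset ι) (f : ι → ℝ) :
    ((∑ i ∈ s, f i : ℝ) : EReal) = ∑ i ∈ s, ((f i : ℝ) : EReal) := by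
  classical
  induction s using Finset.induction_on with
  | empty => simp
  | @insert a s' hni ih =>
    rw [Finset.sum_insert hni, Finset.sum_insert hni, EReal.coe_add, ih]

lemma tmul_ne_bot {t : ℝ} (ht : 0 ≤ t) {x : EReal} (hx : x ≠ ⊥) :
    ((t : ℝ) : EReal) * x ≠ ⊥ := by
  induction x using EReal.rec with
  | bot => exact absurd rfl hx
  | coe r => rw [← EReal.coe_mul]; exact EReal.coe_ne_bot _
  | top =>
    rcases eq_or_lt_of_le ht with h | h
    · rw [← h, EReal.coe_zero, zero_mul]; exact EReal.zero_ne_bot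
    · rw [EReal.coe_mul_top_of_pos h]; simp

end Helpers

end Stmt19Aux

open Stmt19Aux


/-- Lemma 4.1: displacement convexity of the differential entropy.
There is a coupling `μ` of `Q₁,…,Qₙ` (the joint law of a random vector `X` with
`Xᵢ ∼ Qᵢ`) such that `H(Law(Σᵢ tᵢ Xᵢ)) ≤ Σᵢ tᵢ H(Qᵢ)`. -/
theorem stmt_19 (n : ℕ) (Q : Fin n → Measure ℝ)
    (hQ : ∀ i, IsProbabilityMeasure (Q i))
    (t : Fin n → ℝ) (ht0 : ∀ i, 0 ≤ t i) (ht1 : ∀ i, t i ≤ 1)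
    (hsum : ∑ i, t i = 1) :
    ∃ μ : Measure (Fin n → ℝ), IsProbabilityMeasure μ ∧
      (∀ i, μ.map (fun x => x i) = Q i) ∧
      Hent (μ.map fun x => ∑ i, t i * x i) ≤ ∑ i, ((t i : ℝ) : EReal) * Hent (Q i) := by
  classical
  have hgmeas : ∀ i, Measurable (qf (Q i)) := fun i => @qf_measurable (Q i) (hQ i)
  set Φ : ℝ → (Fin n → ℝ) := fun u i => qf (Q i) u with hΦdef
  have hΦ : Measurable Φ := measurable_pi_lambda _ hgmeas
  have hQmap : ∀ i, nu.map (qf (Q i)) = Q i := fun i => @qf_map (Q i) (hQ i)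
  have hmarg : ∀ i, (nu.map Φ).map (fun x => x i) = Q i := by
    intro i
    rw [Measure.map_map (measurable_pi_apply i) hΦ]
    exact hQmap i
  set S : ℝ → ℝ := fun u => ∑ i, t i * qf (Q i) u with hSdef
  have hSmeas : Measurable S :=
    Finset.measurable_sum _ (fun i _ => (hgmeas i).const_mul _)
  have hmapsum : (nu.map Φ).map (fun x => ∑ i, t i * x i) = nu.map S := by
    rw [Measure.map_map
      (Finset.measurable_sum _ (fun i _ => (measurable_pi_apply i).const_mul _)) hΦ]
    rfl
  refine ⟨nu.map Φ, Measure.isProbabilityMeasure_map hΦ.aemeasurable, hmarg, ?_⟩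
  rw [hmapsum]
  by_cases htop : ∃ i, t i ≠ 0 ∧ Hent (Q i) = ⊤
  · obtain ⟨i₀, hti₀, htop₀⟩ := htop
    have hT : ∑ i, ((t i : ℝ) : EReal) * Hent (Q i) = ⊤ := by
      rw [← Finset.add_sum_erase _ _ (Finset.mem_univ i₀), htop₀,
        EReal.coe_mul_top_of_pos ((ht0 i₀).lt_of_ne (Ne.symm hti₀))]
      exact EReal.top_add_of_ne_bot
        (ereal_sum_ne_bot _ _ (fun j _ => tmul_ne_bot (ht0 j) (Hent_ne_bot _)))
    rw [hT]
    exact le_top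
  · push_neg at htop
    obtain ⟨j, htj⟩ : ∃ j, t j ≠ 0 := by
      by_contra hc
      push_neg at hc
      rw [Finset.sum_eq_zero (fun i _ => hc i)] at hsum
      exact one_ne_zero hsum.symm
    set supp : Finset (Fin n) := Finset.univ.filter (fun i => t i ≠ 0) with hsuppdef
    have hjsupp : j ∈ supp := Finset.mem_filter.2 ⟨Finset.mem_univ _, htj⟩
    have hsumsupp : ∑ i ∈ supp, t i = 1 := by
      rw [hsuppdef, Finset.sum_filter_ne_zero]
      exact hsum
    have htpos : ∀ i ∈ supp, 0 < t i := fun i hi =>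
      (ht0 i).lt_of_ne (Ne.symm (Finset.mem_filter.1 hi).2)
    have hcond : ∀ i ∈ supp, (Q i ≪ volume) ∧ Integrable (fun x =>
        min (((Q i).rnDeriv volume x).toReal * Real.log ((Q i).rnDeriv volume x).toReal) 0)
        volume := by
      intro i hi
      have hne := htop i (Finset.mem_filter.1 hi).2
      by_contra hc
      rw [Hent, if_neg hc] at hne
      exact hne rfl
    have hLfin : ∀ i ∈ supp, (∫⁻ x, ENNReal.ofReal
        (((Q i).rnDeriv volume x).toReal * Real.log ((Q i).rnDeriv volume x).toReal)) ≠ ⊤ := by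
      intro i hi
      have hne := htop i (Finset.mem_filter.1 hi).2
      intro hc
      rw [Hent, if_pos (hcond i hi), hc, EReal.coe_ennreal_top] at hne
      exact hne (EReal.top_add_of_ne_bot (EReal.coe_ne_bot _))
    set φ : Fin n → ℝ → ℝ :=
      fun i u => Real.log (((Q i).rnDeriv volume (qf (Q i) u)).toReal) with hφdef
    have hφmeas : ∀ i, Measurable (φ i) := fun i => (logr_measurable (Q i)).comp (hgmeas i)
    have hint : ∀ i ∈ supp, Integrable (φ i) nu ∧
        Hent (Q i) = ((∫ u, φ i u ∂nu : ℝ) : EReal) := by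
      intro i hi
      haveI := hQ i
      have hmin_nu := (min_transfer (hgmeas i) (hQmap i) (hcond i hi).1).1 (hcond i hi).2
      have hpos_nu : ∫⁻ u, ENNReal.ofReal (φ i u) ∂nu ≠ ⊤ := by
        rw [hφdef]
        rw [← pos_transfer (hgmeas i) (hQmap i) (hcond i hi).1]
        exact hLfin i hi
      exact Hent_eq_integral (hgmeas i) (hQmap i) (hcond i hi).1 hmin_nu hpos_nu
    have hqmono : ∀ i, MonotoneOn (qf (Q i)) (Set.Ioo 0 1) :=
      fun i => @qf_monotoneOn (Q i) (hQ i)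
    have hkey : ∀ i ∈ supp, ∀ᵐ u ∂nu,
        ENNReal.ofReal (deriv (qf (Q i)) u) * (Q i).rnDeriv volume (qf (Q i) u) = 1 := by
      intro i hi
      haveI := hQ i
      have hatom : ∀ x : ℝ, Q i {x} = 0 := fun x => (hcond i hi).1 (measure_singleton x)
      have h := rnDeriv_mul_deriv_ae (hqmono i) (@qf_strictMonoOn (Q i) (hQ i) hatom)
        (hgmeas i) (by rw [hQmap i]; exact (hcond i hi).1)
      rw [hQmap i] at h
      exact h
    have hfactsall : ∀ᵐ u ∂nu, ∀ i, i ∈ supp →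
        0 < deriv (qf (Q i)) u ∧
        ((Q i).rnDeriv volume (qf (Q i) u)).toReal * deriv (qf (Q i)) u = 1 := by
      rw [ae_all_iff]
      intro i
      by_cases hi : i ∈ supp
      · filter_upwards [hkey i hi] with u hu
        intro _
        have hd : 0 < deriv (qf (Q i)) u := by
          by_contra hc
          push_neg at hc
          rw [ENNReal.ofReal_of_nonpos hc, zero_mul] at hu
          exact zero_ne_one hu
        refine ⟨hd, ?_⟩
        have hfin : (Q i).rnDeriv volume (qf (Q i) u) ≠ ⊤ := by
          intro hc
          rw [hc, ENNReal.mul_top (by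
            simp only [ne_eq, ENNReal.ofReal_eq_zero, not_le]
            exact hd)] at hu
          exact (ENNReal.top_ne_one) hu
        have h2 := congrArg ENNReal.toReal hu
        rw [ENNReal.toReal_mul, ENNReal.toReal_ofReal hd.le, ENNReal.toReal_one] at h2
        linarith [h2]
      · exact Filter.Eventually.of_forall (fun u hc => absurd hc hi)
    have hSmono : MonotoneOn S (Set.Ioo 0 1) := by
      intro u hu v hv huv
      exact Finset.sum_le_sum
        (fun i _ => mul_le_mul_of_nonneg_left (hqmono i hu hv huv) (ht0 i))
    have hSstrict : StrictMonoOn S (Set.Ioo 0 1) := by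
      intro u hu v hv huv
      have hatomj : ∀ x : ℝ, Q j {x} = 0 := fun x => (hcond j hjsupp).1 (measure_singleton x)
      have hstrictj := @qf_strictMonoOn (Q j) (hQ j) hatomj
      refine Finset.sum_lt_sum
        (fun i _ => mul_le_mul_of_nonneg_left (hqmono i hu hv huv.le) (ht0 i))
        ⟨j, Finset.mem_univ j, ?_⟩
      exact mul_lt_mul_of_pos_left (hstrictj hu hv huv) (htpos j hjsupp)
    have hDall : ∀ᵐ u ∂nu, ∀ i, HasDerivAt (qf (Q i)) (deriv (qf (Q i)) u) u :=
      ae_all_iff.2 fun i => ae_hasDerivAt (hqmono i)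
    have hSderiv : ∀ᵐ u ∂nu, deriv S u = ∑ i, t i * deriv (qf (Q i)) u := by
      filter_upwards [hDall] with u hu
      have hS : HasDerivAt S (∑ i, t i * deriv (qf (Q i)) u) u := by
        apply HasDerivAt.fun_sum
        intro i _
        exact (hu i).const_mul (t i)
      exact hS.deriv
    have hdnn : ∀ᵐ u ∂nu, ∀ i, 0 ≤ deriv (qf (Q i)) u := by
      rw [ae_all_iff]
      intro i
      filter_upwards [ae_hasDerivAt (hqmono i), ae_restrict_mem measurableSet_Ioo] with u h hu
      exact deriv_nonneg_of_monotoneOn (hqmono i) hu h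
    have hsum_eq_supp : ∀ u : ℝ,
        ∑ i, t i * deriv (qf (Q i)) u = ∑ i ∈ supp, t i * deriv (qf (Q i)) u := by
      intro u
      rw [hsuppdef]
      exact (Finset.sum_filter_of_ne (fun i _ h => left_ne_zero_of_mul h)).symm
    have hSpos : ∀ᵐ u ∂nu, 0 < deriv S u := by
      filter_upwards [hSderiv, hdnn, hfactsall] with u hd hnn hfa
      rw [hd]
      have h1 : t j * deriv (qf (Q j)) u ≤ ∑ i, t i * deriv (qf (Q i)) u :=
        Finset.single_le_sum (f := fun i => t i * deriv (qf (Q i)) u)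
          (fun i _ => mul_nonneg (ht0 i) (hnn i)) (Finset.mem_univ j)
      have h2 : 0 < t j * deriv (qf (Q j)) u :=
        mul_pos (htpos j hjsupp) (hfa j hjsupp).1
      linarith
    have hSac : nu.map S ≪ volume :=
      map_absolutelyContinuous hSmono hSstrict hSmeas hSpos
    have hSkey := rnDeriv_mul_deriv_ae hSmono hSstrict hSmeas hSac
    set φS : ℝ → ℝ :=
      fun u => Real.log (((nu.map S).rnDeriv volume (S u)).toReal) with hφSdef
    have hφSmeas : Measurable φS := (logr_measurable (nu.map S)).comp hSmeas
    have hcard1 : (1:ℝ) ≤ (supp.card : ℝ) := by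
      have : 0 < supp.card := Finset.card_pos.2 ⟨j, hjsupp⟩
      exact_mod_cast this
    have hmain : ∀ᵐ u ∂nu, φS u ≤ ∑ i ∈ supp, t i * φ i u ∧
        |φS u| ≤ Real.log (supp.card) + ∑ i ∈ supp, |φ i u| := by
      filter_upwards [hSderiv, hdnn, hfactsall, hSkey] with u hSd hnn hfa hSk
      set d : Fin n → ℝ := fun i => deriv (qf (Q i)) u with hddef
      have hdpos : ∀ i ∈ supp, 0 < d i := fun i hi => (hfa i hi).1
      have hφeq : ∀ i ∈ supp, φ i u = - Real.log (d i) := by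
        intro i hi
        have h1 := (hfa i hi).2
        have h2 : ((Q i).rnDeriv volume (qf (Q i) u)).toReal = (d i)⁻¹ :=
          eq_inv_of_mul_eq_one_left h1
        rw [hφdef]
        simp only []
        rw [h2, Real.log_inv]
      -- deriv S u equals the sum, positivity
      have hdS_eq : deriv S u = ∑ i ∈ supp, t i * d i := by
        rw [hSd, hsum_eq_supp u]
      have hdSpos : 0 < deriv S u := by
        rw [hdS_eq]
        have h1 : t j * d j ≤ ∑ i ∈ supp, t i * d i :=
          Finset.single_le_sum (f := fun i => t i * d i)
            (fun i hi => mul_nonneg (ht0 i) (hnn i)) hjsupp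
        have h2 : 0 < t j * d j := mul_pos (htpos j hjsupp) (hdpos j hjsupp)
        linarith
      -- φS u = - log (deriv S u)
      have hφS_eq : φS u = - Real.log (deriv S u) := by
        have hd : 0 < deriv S u := hdSpos
        have hfin : (nu.map S).rnDeriv volume (S u) ≠ ⊤ := by
          intro hc
          rw [hc, ENNReal.mul_top (by
            simp only [ne_eq, ENNReal.ofReal_eq_zero, not_le]
            exact hd)] at hSk
          exact (ENNReal.top_ne_one) hSk
        have h2 := congrArg ENNReal.toReal hSk
        rw [ENNReal.toReal_mul, ENNReal.toReal_ofReal hd.le, ENNReal.toReal_one] at h2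
        have h3 : ((nu.map S).rnDeriv volume (S u)).toReal = (deriv S u)⁻¹ :=
          eq_inv_of_mul_eq_one_left (by linarith [h2])
        rw [hφSdef]
        simp only []
        rw [h3, Real.log_inv]
      -- AM-GM
      have hgm := Real.geom_mean_le_arith_mean_weighted supp t d
        (fun i _ => ht0 i) hsumsupp (fun i hi => (hdpos i hi).le)
      have hprodpos : 0 < ∏ i ∈ supp, d i ^ t i :=
        Finset.prod_pos (fun i hi => Real.rpow_pos_of_pos (hdpos i hi) _)
      have hlogprod : Real.log (∏ i ∈ supp, d i ^ t i)
          = ∑ i ∈ supp, t i * Real.log (d i) := by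
        rw [Real.log_prod (fun i hi => (Real.rpow_pos_of_pos (hdpos i hi) _).ne')]
        exact Finset.sum_congr rfl (fun i hi => Real.log_rpow (hdpos i hi) _)
      have hlog1 : ∑ i ∈ supp, t i * Real.log (d i) ≤ Real.log (∑ i ∈ supp, t i * d i) := by
        rw [← hlogprod]
        exact Real.log_le_log hprodpos hgm
      have hupper : φS u ≤ ∑ i ∈ supp, t i * φ i u := by
        rw [hφS_eq, hdS_eq]
        calc - Real.log (∑ i ∈ supp, t i * d i) ≤ - ∑ i ∈ supp, t i * Real.log (d i) := by
              linarith [hlog1]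
          _ = ∑ i ∈ supp, t i * (- Real.log (d i)) := by
              rw [← Finset.sum_neg_distrib]
              exact Finset.sum_congr rfl (fun i _ => by ring)
          _ = ∑ i ∈ supp, t i * φ i u :=
              Finset.sum_congr rfl (fun i hi => by rw [hφeq i hi])
      -- lower bound
      set X : ℝ := ∑ i ∈ supp, max (Real.log (d i)) 0 with hXdef
      have hXnn : 0 ≤ X :=
        Finset.sum_nonneg (fun i _ => le_max_right _ _)
      have hsumle : (∑ i ∈ supp, t i * d i) ≤ (supp.card : ℝ) * Real.exp X := by
        calc ∑ i ∈ supp, t i * d i ≤ ∑ i ∈ supp, d i :=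
              Finset.sum_le_sum (fun i hi =>
                mul_le_of_le_one_left (hdpos i hi).le (ht1 i))
          _ ≤ ∑ _i ∈ supp, Real.exp X := by
              refine Finset.sum_le_sum (fun i hi => ?_)
              have hX1 : Real.log (d i) ≤ X := by
                rw [hXdef]
                exact le_trans (le_max_left _ _)
                  (Finset.single_le_sum (f := fun k => max (Real.log (d k)) 0)
                    (fun k _ => le_max_right _ _) hi)
              rw [← Real.exp_log (hdpos i hi)]
              exact Real.exp_le_exp.2 hX1
          _ = (supp.card : ℝ) * Real.exp X := by
              rw [Finset.sum_const, nsmul_eq_mul]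
      have hlogup : Real.log (deriv S u) ≤ Real.log (supp.card) + X := by
        rw [hdS_eq]
        calc Real.log (∑ i ∈ supp, t i * d i)
            ≤ Real.log ((supp.card : ℝ) * Real.exp X) := by
              apply Real.log_le_log ?_ hsumle
              · rw [← hdS_eq]; exact hdSpos
          _ = Real.log (supp.card) + X := by
              rw [Real.log_mul (by positivity) (Real.exp_ne_zero _), Real.log_exp]
      have hXle : X ≤ ∑ i ∈ supp, |φ i u| := by
        refine Finset.sum_le_sum (fun i hi => ?_)
        rw [hφeq i hi]
        rw [abs_neg]
        exact max_le (le_abs_self _) (abs_nonneg _)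
      have habs : |φS u| ≤ Real.log (supp.card) + ∑ i ∈ supp, |φ i u| := by
        rw [abs_le]
        constructor
        · rw [hφS_eq]
          have := hlogup
          have hlc : 0 ≤ Real.log (supp.card) := Real.log_nonneg hcard1
          nlinarith [hXle]
        · refine le_trans hupper ?_
          have h1 : ∑ i ∈ supp, t i * φ i u ≤ ∑ i ∈ supp, |φ i u| := by
            refine Finset.sum_le_sum (fun i hi => ?_)
            calc t i * φ i u ≤ |t i * φ i u| := le_abs_self _
              _ = t i * |φ i u| := by rw [abs_mul, abs_of_nonneg (ht0 i)]
              _ ≤ 1 * |φ i u| := mul_le_mul_of_nonneg_right (ht1 i) (abs_nonneg _)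
              _ = |φ i u| := one_mul _
          have hlc : 0 ≤ Real.log (supp.card) := Real.log_nonneg hcard1
          linarith
      exact ⟨hupper, habs⟩
    have hφi_int : ∀ i ∈ supp, Integrable (φ i) nu := fun i hi => (hint i hi).1
    have hmaj : Integrable (fun u => Real.log (supp.card) + ∑ i ∈ supp, |φ i u|) nu :=
      (integrable_const _).add
        (integrable_finset_sum _ (fun i hi => (hφi_int i hi).abs))
    have hφS_int : Integrable φS nu := by
      refine hmaj.mono' hφSmeas.aestronglyMeasurable ?_
      filter_upwards [hmain] with u hu
      rw [Real.norm_eq_abs]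
      exact hu.2
    have hminS : Integrable (fun u => min (φS u) 0) nu := by
      have h := hφS_int.inf (integrable_zero ℝ ℝ nu)
      simpa [Pi.inf_def] using h
    have hposS : ∫⁻ u, ENNReal.ofReal (φS u) ∂nu ≠ ⊤ := by
      have hle : ∀ u, ENNReal.ofReal (φS u) ≤ (‖φS u‖₊ : ℝ≥0∞) :=
        fun u => Real.ofReal_le_enorm _
      exact (lt_of_le_of_lt (lintegral_mono hle) hφS_int.2).ne
    haveI : IsProbabilityMeasure (nu.map S) := Measure.isProbabilityMeasure_map hSmeas.aemeasurable
    obtain ⟨-, hHentS⟩ := Hent_eq_integral hSmeas rfl hSac hminS hposS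
    rw [hHentS]
    have hRHS : ∑ i, ((t i : ℝ) : EReal) * Hent (Q i)
        = ((∑ i ∈ supp, t i * ∫ u, φ i u ∂nu : ℝ) : EReal) := by
      have h0 : ∑ i, ((t i : ℝ) : EReal) * Hent (Q i)
          = ∑ i ∈ supp, ((t i : ℝ) : EReal) * Hent (Q i) := by
        rw [hsuppdef]
        refine (Finset.sum_filter_of_ne (fun i _ h => ?_)).symm
        intro hc
        rw [hc, EReal.coe_zero, zero_mul] at h
        exact h rfl
      rw [h0, ereal_coe_sum]
      refine Finset.sum_congr rfl (fun i hi => ?_)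
      rw [(hint i hi).2, ← EReal.coe_mul]
    rw [hRHS]
    rw [EReal.coe_le_coe_iff]
    have hsum_int : Integrable (fun u => ∑ i ∈ supp, t i * φ i u) nu :=
      integrable_finset_sum _ (fun i hi => ((hφi_int i hi).const_mul _))
    calc ∫ u, φS u ∂nu ≤ ∫ u, (∑ i ∈ supp, t i * φ i u) ∂nu :=
          integral_mono_ae hφS_int hsum_int (hmain.mono fun u h => h.1)
      _ = ∑ i ∈ supp, t i * ∫ u, φ i u ∂nu := by
          rw [integral_finset_sum _ (fun i hi => ((hφi_int i hi).const_mul _))]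
          exact Finset.sum_congr rfl (fun i _ => integral_const_mul _ _)


end
end
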